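/- arXiv:2005.07171 — 12 statements merged into one kernel-verified Lean document; each statement's English description precedes it below -/
import Mathlib

section
/- Let G be a finite additive abelian group, let ψ : G → ℂ, let Q be the G×G complex matrix with entries Q_{g,h} = ψ(h − g), and let χ be an additive character of G with values in ℂ. Then the discrete Fourier transform of the first row of the matrix exponential of Q equals the exponential of the discrete Fourier transform of ψ: ∑_{h∈G} χ(h) · (exp Q)_{0,h} = exp( ∑_{h∈G} χ(h) · ψ(h) ). -/
/-- For a `G`-circulant complex matrix `Q` with `Q g h = ψ (h - g)` and an additive character
`χ` of `G`, the discrete Fourier transform of the first row of the matrix exponential of `Q`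
is the exponential of the discrete Fourier transform of `ψ`. -/
theorem dft_exp_row_zero {G : Type*} [AddCommGroup G] [Fintype G] [DecidableEq G]
    (ψ : G → ℂ) (Q : Matrix G G ℂ) (hQ : ∀ g h : G, Q g h = ψ (h - g))
    (χ : AddChar G ℂ) :
    ∑ h : G, χ h * (NormedSpace.exp Q) 0 h = Complex.exp (∑ h : G, χ h * ψ h) := by
  letI : SeminormedRing (Matrix G G ℂ) := Matrix.linftyOpSemiNormedRing
  letI : NormedRing (Matrix G G ℂ) := Matrix.linftyOpNormedRing
  letI : NormedAlgebra ℂ (Matrix G G ℂ) := Matrix.linftyOpNormedAlgebra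
  set c : ℂ := ∑ h : G, χ h * ψ h with hc
  -- the linear functional M ↦ ∑ h, χ h * M 0 h
  let L₀ : Matrix G G ℂ →ₗ[ℂ] ℂ :=
    { toFun := fun M => ∑ h : G, χ h * M 0 h
      map_add' := by intro M N; simp [Matrix.add_apply, mul_add, Finset.sum_add_distrib]
      map_smul' := by
        intro a M
        simp only [Matrix.smul_apply, smul_eq_mul, RingHom.id_apply, Finset.mul_sum]
        exact Finset.sum_congr rfl fun h _ => by ring }
  let L : Matrix G G ℂ →L[ℂ] ℂ := ⟨L₀, L₀.continuous_of_finiteDimensional⟩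
  have hconv : ∀ k : G, ∑ h : G, χ h * ψ (h - k) = χ k * c := by
    intro k
    have h1 : ∑ j : G, χ (k + j) * ψ j = ∑ h : G, χ h * ψ (h - k) :=
      Fintype.sum_bijective (fun j => k + j) (Equiv.addLeft k).bijective _ _
        (fun x => by rw [add_sub_cancel_left])
    rw [← h1, hc, Finset.mul_sum]
    exact Finset.sum_congr rfl fun j _ => by rw [AddChar.map_add_eq_mul]; ring
  have key : ∀ n : ℕ, L (Q ^ n) = c ^ n := by
    intro n
    induction n with
    | zero => simp [L, L₀, Matrix.one_apply]
    | succ n ih =>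
      have step : L (Q ^ (n + 1)) = c * L (Q ^ n) := by
        show (∑ h : G, χ h * (Q ^ n * Q) 0 h) = c * ∑ h : G, χ h * (Q ^ n) 0 h
        simp only [Matrix.mul_apply, Finset.mul_sum]
        rw [Finset.sum_comm]
        calc (∑ k : G, ∑ h : G, χ h * ((Q ^ n) 0 k * Q k h))
            = ∑ k : G, (Q ^ n) 0 k * ∑ h : G, χ h * ψ (h - k) := by
              refine Finset.sum_congr rfl fun k _ => ?_
              rw [Finset.mul_sum]
              refine Finset.sum_congr rfl fun h _ => ?_
              rw [hQ]; ring
          _ = ∑ k : G, (Q ^ n) 0 k * (χ k * c) := by simp_rw [hconv]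
          _ = ∑ i : G, c * (χ i * (Q ^ n) 0 i) :=
              Finset.sum_congr rfl fun k _ => by ring
      rw [step, ih, pow_succ]; ring
  have hsum : Summable fun n : ℕ => ((Nat.factorial n : ℂ))⁻¹ • Q ^ n :=
    NormedSpace.expSeries_summable' (𝕂 := ℂ) Q
  have hmain : L (NormedSpace.exp Q) = ∑' n : ℕ, ((Nat.factorial n : ℂ))⁻¹ • c ^ n := by
    rw [NormedSpace.exp_eq_tsum (𝕂 := ℂ), L.map_tsum hsum]
    exact tsum_congr fun n => by rw [map_smul, key]
  have hL : L (NormedSpace.exp Q) = ∑ h : G, χ h * (NormedSpace.exp Q) 0 h := rfl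
  rw [← hL, hmain, Complex.exp_eq_exp_ℂ,
    congrFun (NormedSpace.exp_eq_tsum (𝕂 := ℂ) (𝔸 := ℂ)) c]
end

section
/- Let G be a finite additive abelian group, e a character enumeration of G with discrete Fourier transform matrix K, 𝓛 a finite set, and L : G → 𝓛 a labeling function. If L is G-compatible with respect to e, then L(g) ≠ L(0) for every nonzero g ∈ G. -/
lemma complex_eq_one_of_re_eq_one {z : ℂ} (hn : ‖z‖ = 1) (hr : z.re = 1) : z = 1 := by
  have h2 : z.re ^ 2 + z.im ^ 2 = 1 := by
    have := Complex.sq_norm z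
    rw [Complex.sq_norm, Complex.normSq_apply] at this
    have : ‖z‖ = 1 := hn
    have := congrArg (· ^ 2) this
    simp [Complex.sq_norm, Complex.normSq_apply] at this
    nlinarith [this]
  have him : z.im = 0 := by nlinarith
  exact Complex.ext hr him

/-- If `L : G → 𝓛` is a `G`-compatible labeling function (with respect to a character
enumeration `e` of `G` with discrete Fourier transform matrix `K`), then no nonzero group
element receives the same label as `0`. -/
theorem compatible_labeling_zero_label {G : Type*} [AddCommGroup G] [Fintype G]
    {𝓛 : Type*} [Fintype 𝓛]
    (e : G → AddChar G ℂ) (he : Function.Bijective e)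
    (hmul : ∀ g h : G, e (g + h) = e g * e h)
    (K : Matrix G G ℂ) (hK : ∀ g h : G, K g h = e g h)
    (L : G → 𝓛)
    (hcompat : ∀ (x : 𝓛 → ℂ) (g h : G), L g = L h →
      (∑ k : G, K g k * x (L k) = ∑ k : G, K h k * x (L k)) ∧
      (∑ k : G, (starRingEnd ℂ) (K g k) * x (L k) =
        ∑ k : G, (starRingEnd ℂ) (K h k) * x (L k))) :
    ∀ g : G, g ≠ 0 → L g ≠ L 0 := by
  intro g hg hL
  -- e 0 is the trivial character
  have he0 : ∀ a : G, e 0 a = 1 := by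
    intro a
    have h := hmul 0 0
    rw [add_zero] at h
    have : e 0 a = e 0 a * e 0 a := by
      conv_lhs => rw [h]
      rfl
    have hne : e 0 a ≠ 0 := by
      intro h0
      have := AddChar.norm_apply (e 0) a
      rw [h0] at this; simp at this
    field_simp at this
    tauto
  -- show e g k0 = 1 for each k0
  have key : ∀ k0 : G, e g k0 = 1 := by
    intro k0
    classical
    set S := Finset.univ.filter (fun k => L k = L k0) with hS
    set x : 𝓛 → ℂ := fun m => if m = L k0 then 1 else 0 with hx
    obtain ⟨h1, -⟩ := hcompat x g 0 hL
    have hsum : ∑ k ∈ S, e g k = (S.card : ℂ) := by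
      have lhs : ∑ k : G, K g k * x (L k) = ∑ k ∈ S, e g k := by
        rw [Finset.sum_filter]
        apply Finset.sum_congr rfl
        intro k _
        by_cases hk : L k = L k0 <;> simp [hx, hk, hK]
      have rhs : ∑ k : G, K 0 k * x (L k) = (S.card : ℂ) := by
        rw [Finset.card_filter]
        push_cast
        rw [Finset.sum_filter] at *
        apply Finset.sum_congr rfl
        intro k _
        by_cases hk : L k = L k0 <;> simp [hx, hk, hK, he0]
      rw [← lhs, h1, rhs]
    -- take real parts
    have hre : ∑ k ∈ S, (e g k).re = (S.card : ℝ) := by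
      have := congrArg Complex.re hsum
      simpa [Complex.re_sum] using this
    have hle : ∀ k ∈ S, (e g k).re ≤ 1 := by
      intro k _
      have := Complex.abs_re_le_norm (e g k)
      have hn : ‖e g k‖ = 1 := by
        exact AddChar.norm_apply _ _
      rw [hn] at this
      exact (abs_le.mp this).2
    have heq : ∀ k ∈ S, (e g k).re = 1 := by
      have := (Finset.sum_eq_sum_iff_of_le hle).mp ?_
      · exact this
      · rw [hre, Finset.sum_const, nsmul_eq_mul, mul_one]
    have hk0 : k0 ∈ S := by simp [hS]
    have := heq k0 hk0
    exact complex_eq_one_of_re_eq_one (AddChar.norm_apply _ _) this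
  have : e g = e 0 := by
    ext a
    rw [key a, he0 a]
  exact hg (he.injective this)
end

section
/- Let G be a finite additive abelian group, e a character enumeration of G with discrete Fourier transform matrix K, 𝓛 a finite set, and L : G → 𝓛 a labeling function such that for all g, h ∈ G one has L(g) = L(h) if and only if g = h or g = −h. Then L is G-compatible with respect to e: for every vector x : 𝓛 → ℂ and all g,h ∈ G with L(g) = L(h), ∑_{k∈G} K_{g,k}·x(L(k)) = ∑_{k∈G} K_{h,k}·x(L(k)) and ∑_{k∈G} conj(K_{g,k})·x(L(k)) = ∑_{k∈G} conj(K_{h,k})·x(L(k)). -/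
/-- If a labeling function `L : G → 𝓛` identifies two group elements exactly when they are
equal or inverse to each other, then `L` is `G`-compatible with respect to any character
enumeration `e` of `G` with discrete Fourier transform matrix `K`. -/
theorem strictly_symmetric_labeling_compatible {G : Type*} [AddCommGroup G] [Fintype G]
    {𝓛 : Type*} [Fintype 𝓛]
    (e : G → AddChar G ℂ) (he : Function.Bijective e)
    (hmul : ∀ g h : G, e (g + h) = e g * e h)
    (K : Matrix G G ℂ) (hK : ∀ g h : G, K g h = e g h)
    (L : G → 𝓛) (hL : ∀ g h : G, L g = L h ↔ (g = h ∨ g = -h)) :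
    ∀ (x : 𝓛 → ℂ) (g h : G), L g = L h →
      (∑ k : G, K g k * x (L k) = ∑ k : G, K h k * x (L k)) ∧
      (∑ k : G, (starRingEnd ℂ) (K g k) * x (L k) =
        ∑ k : G, (starRingEnd ℂ) (K h k) * x (L k)) := by
  -- values of characters are nonzero
  have hne : ∀ (χ : AddChar G ℂ) (k : G), χ k ≠ 0 := by
    intro χ k h0
    have : χ k * χ (-k) = 1 := by
      rw [← AddChar.map_add_eq_mul, add_neg_cancel, AddChar.map_zero_eq_one]
    rw [h0, zero_mul] at this
    exact zero_ne_one this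
  -- e 0 is the trivial character
  have h0 : ∀ k : G, e 0 k = 1 := by
    intro k
    have h := congrFun (congrArg (fun χ : AddChar G ℂ => (χ : G → ℂ)) (hmul 0 0)) k
    simp only [add_zero, AddChar.coe_mul, Pi.mul_apply] at h
    have := hne (e 0) k
    field_simp at h
    tauto
  -- key: e (-h) k = e h (-k)
  have hkey : ∀ h k : G, e (-h) k = e h (-k) := by
    intro h k
    have h1 : e (-h) k * e h k = 1 := by
      have := congrFun (congrArg (fun χ : AddChar G ℂ => (χ : G → ℂ)) (hmul (-h) h)) k
      simp only [neg_add_cancel, AddChar.coe_mul, Pi.mul_apply] at this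
      rw [← this, h0]
    have h2 : e h (-k) * e h k = 1 := by
      rw [← AddChar.map_add_eq_mul, neg_add_cancel, AddChar.map_zero_eq_one]
    exact mul_right_cancel₀ (hne (e h) k) (h1.trans h2.symm)
  have hLneg : ∀ k : G, L (-k) = L k := fun k => (hL (-k) k).2 (Or.inr rfl)
  intro x g h hgh
  rcases (hL g h).1 hgh with rfl | rfl
  · exact ⟨rfl, rfl⟩
  · constructor
    · apply Fintype.sum_equiv (Equiv.neg G)
      intro k
      simp only [Equiv.neg_apply]
      rw [hLneg, hK, hK, hkey]
    · apply Fintype.sum_equiv (Equiv.neg G)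
      intro k
      simp only [Equiv.neg_apply]
      rw [hLneg, hK, hK, hkey]
end

section
/- Let G be a finite additive abelian group, e a character enumeration of G with discrete Fourier transform matrix K, 𝓛 a finite set, and L : G → 𝓛 a symmetric G-compatible labeling function. Let P be a (G,L)-Markov matrix determined by f : G → ℝ, and for g ∈ G let λ_g denote the real part of ∑_{h∈G} K_{g,h}·f(h) (these sums are in fact real and are the eigenvalues of P). Then P is (G,L)-embeddable if and only if: λ_0 = 1; λ_g > 0 for all g ∈ G; λ_g = λ_h whenever L(g) = L(h); and for every nonzero g ∈ G the real-power product ∏_{h∈G} λ_h^{Re(K_{g,h})} ≥ 1. -/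
open Complex
set_option linter.unusedSectionVars false

section basics
variable {G : Type*} [AddCommGroup G] [Fintype G] [DecidableEq G]
    (e : G → AddChar G ℂ)

lemma he0 (hmul : ∀ g h : G, e (g + h) = e g * e h) : e 0 = 1 := by
  have h := hmul 0 0
  rw [add_zero] at h
  ext x
  have hx := congrFun (congrArg (⇑) h) x
  simp only [AddChar.mul_apply] at hx
  have hne : e 0 x ≠ 0 := by
    have : ‖e 0 x‖ = 1 := AddChar.norm_apply _ _
    intro h0; rw [h0] at this; simp at this
  have : e 0 x * 1 = e 0 x * e 0 x := by rw [mul_one]; exact hx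
  have := mul_left_cancel₀ hne this
  simp [AddChar.one_apply, ← this]

lemma hconj (g h : G) : (starRingEnd ℂ) (e g h) = e g (-h) := by
  rw [AddChar.map_neg_eq_inv]
  have : ‖e g h‖ = 1 := AddChar.norm_apply _ _
  rw [inv_eq_conj this]

lemma hrow0 (he : Function.Bijective e) (hmul : ∀ g h : G, e (g + h) = e g * e h) (g : G) :
    (∑ h : G, e g h) = if g = 0 then (Fintype.card G : ℂ) else 0 := by
  classical
  rw [AddChar.sum_eq_ite]
  congr 1
  simp only [eq_iff_iff]
  constructor
  · intro hz
    have : e g = e 0 := by rw [he0 e hmul]; exact hz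
    exact he.injective this
  · rintro rfl; rw [show (0 : AddChar G ℂ) = 1 from rfl, he0 e hmul]

lemma horth (he : Function.Bijective e) (hmul : ∀ g h : G, e (g + h) = e g * e h) (g g' : G) :
    (∑ h : G, e g h * (starRingEnd ℂ) (e g' h)) = if g = g' then (Fintype.card G : ℂ) else 0 := by
  have : ∀ h : G, e g h * (starRingEnd ℂ) (e g' h) = e (g - g') h := by
    intro h
    rw [hconj, sub_eq_add_neg, hmul, AddChar.mul_apply]
    congr 1
    rw [AddChar.map_neg_eq_inv]
    have h1 : e (-g') h * e g' h = 1 := by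
      rw [← AddChar.mul_apply, ← hmul, neg_add_cancel, he0 e hmul, AddChar.one_apply]
    exact (eq_inv_of_mul_eq_one_left h1).symm
  rw [Finset.sum_congr rfl fun h _ => this h, hrow0 e he hmul]
  simp [sub_eq_zero]

end basics

section basics2
variable {G : Type*} [AddCommGroup G] [Fintype G] [DecidableEq G] (e : G → AddChar G ℂ)

lemma hsigma (he : Function.Bijective e) (hmul : ∀ g h : G, e (g + h) = e g * e h) :
    ∃ σ : G ≃ G, (∀ m g : G, e (σ m) g = e g m) ∧ σ 0 = 0 := by
  have hchi : ∀ m : G, ∃ s : G, ∀ g : G, e s g = e g m := by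
    intro m
    obtain ⟨s, hs⟩ := he.surjective
      { toFun := fun g => e g m
        map_zero_eq_one' := by show e 0 m = 1; rw [he0 e hmul]; exact AddChar.one_apply _
        map_add_eq_mul' := fun a b => by show e (a + b) m = _; rw [hmul]; rfl }
    exact ⟨s, fun g => by rw [hs]; rfl⟩
  choose s hs using hchi
  have hinj : Function.Injective s := by
    intro m m' hmm
    have h1 : ∀ g : G, e g m = e g m' := fun g => by rw [← hs m g, hmm, hs m' g]
    have h2 : ∀ ψ : AddChar G ℂ, ψ (m - m') = 1 := by
      intro ψ
      obtain ⟨g, rfl⟩ := he.surjective ψ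
      have hne : e g m' ≠ 0 := by
        have : ‖e g m'‖ = 1 := AddChar.norm_apply _ _
        intro h0; rw [h0] at this; simp at this
      rw [sub_eq_add_neg, AddChar.map_add_eq_mul, AddChar.map_neg_eq_inv, ← h1 g,
        mul_inv_cancel₀ (h1 g ▸ hne)]
    have := (AddChar.forall_apply_eq_zero).mp h2
    exact sub_eq_zero.mp this
  have hbij := Finite.injective_iff_bijective.mp hinj
  refine ⟨Equiv.ofBijective s hbij, fun m g => hs m g, ?_⟩
  show s 0 = 0
  refine he.injective ?_
  ext g
  rw [hs 0 g, AddChar.map_zero_eq_one, he0 e hmul, AddChar.one_apply]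

end basics2

lemma expMapAux {m : Type*} [Fintype m] [DecidableEq m] (A : Matrix m m ℝ) :
    (NormedSpace.exp A).map (algebraMap ℝ ℂ) = NormedSpace.exp (A.map (algebraMap ℝ ℂ)) := by
  letI : SeminormedRing (Matrix m m ℝ) := Matrix.linftyOpSemiNormedRing
  letI : NormedRing (Matrix m m ℝ) := Matrix.linftyOpNormedRing
  letI : NormedAlgebra ℝ (Matrix m m ℝ) := Matrix.linftyOpNormedAlgebra
  letI : SeminormedRing (Matrix m m ℂ) := Matrix.linftyOpSemiNormedRing
  letI : NormedRing (Matrix m m ℂ) := Matrix.linftyOpNormedRing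
  letI : NormedAlgebra ℝ (Matrix m m ℂ) := Matrix.linftyOpNormedAlgebra
  letI : NormedAlgebra ℚ (Matrix m m ℝ) := Matrix.linftyOpNormedAlgebra
  letI : NormedAlgebra ℚ (Matrix m m ℂ) := Matrix.linftyOpNormedAlgebra
  have hcont : Continuous ((algebraMap ℝ ℂ).mapMatrix : Matrix m m ℝ →+* Matrix m m ℂ) := by
    show Continuous fun A : Matrix m m ℝ => A.map (algebraMap ℝ ℂ)
    exact Continuous.matrix_map continuous_id (continuous_algebraMap ℝ ℂ)
  exact NormedSpace.map_exp ((algebraMap ℝ ℂ).mapMatrix) hcont A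

lemma keyAux {G : Type*} [AddCommGroup G] [Fintype G] [DecidableEq G]
    (K : Matrix G G ℂ)
    (horth : ∀ g g' : G, (∑ h : G, K g h * (starRingEnd ℂ) (K g' h)) =
      if g = g' then (Fintype.card G : ℂ) else 0)
    (horthc : ∀ a b : G, (∑ g : G, (starRingEnd ℂ) (K g a) * K g b) =
      if a = b then (Fintype.card G : ℂ) else 0)
    (hmulK : ∀ c d g : G, K c (d + g) = K c d * K c g)
    (P : Matrix G G ℝ) (f : G → ℝ) (hP : ∀ g h : G, P g h = f (h - g))
    (lam : G → ℝ) (hFhat : ∀ c : G, (∑ h : G, K c h * (f h : ℂ)) = ((lam c : ℝ) : ℂ))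
    (ψr : G → ℝ) :
    P = NormedSpace.exp (Matrix.of fun g h : G => ψr (h - g)) ↔
      ∀ c : G, ((lam c : ℝ) : ℂ) = Complex.exp (∑ d : G, K c d * (ψr d : ℂ)) := by
  classical
  have hn : (Fintype.card G : ℂ) ≠ 0 := by
    simp [Fintype.card_ne_zero]
  set U : Matrix G G ℂ := Matrix.of fun h c => K c h with hUdef
  set W : Matrix G G ℂ := Matrix.of fun c h => (Fintype.card G : ℂ)⁻¹ * (starRingEnd ℂ) (K c h)
    with hWdef
  have hWU : W * U = 1 := by
    ext a b
    rw [Matrix.mul_apply, Matrix.one_apply]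
    simp only [hWdef, hUdef, Matrix.of_apply]
    rw [show (∑ h : G, (Fintype.card G : ℂ)⁻¹ * (starRingEnd ℂ) (K a h) * K b h)
        = (Fintype.card G : ℂ)⁻¹ * ∑ h : G, K b h * (starRingEnd ℂ) (K a h) by
      rw [Finset.mul_sum]; exact Finset.sum_congr rfl fun h _ => by ring]
    rw [horth b a]
    by_cases hab : a = b
    · simp [hab, inv_mul_cancel₀ hn]
    · simp [hab, Ne.symm hab]
  have hUW : U * W = 1 := by
    ext a b
    rw [Matrix.mul_apply, Matrix.one_apply]
    simp only [hWdef, hUdef, Matrix.of_apply]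
    rw [show (∑ c : G, K c a * ((Fintype.card G : ℂ)⁻¹ * (starRingEnd ℂ) (K c b)))
        = (Fintype.card G : ℂ)⁻¹ * ∑ c : G, (starRingEnd ℂ) (K c b) * K c a by
      rw [Finset.mul_sum]; exact Finset.sum_congr rfl fun c _ => by ring]
    rw [horthc b a]
    by_cases hab : a = b
    · simp [hab, inv_mul_cancel₀ hn]
    · simp [hab, Ne.symm hab]
  have hdiag : ∀ m : G → ℝ, (Matrix.of fun g h : G => (m (h - g) : ℂ)) =
      U * Matrix.diagonal (fun c => ∑ d : G, K c d * (m d : ℂ)) * W := by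
    intro m
    have h1 : (Matrix.of fun g h : G => (m (h - g) : ℂ)) * U =
        U * Matrix.diagonal (fun c => ∑ d : G, K c d * (m d : ℂ)) := by
      ext g c
      rw [Matrix.mul_apply, Matrix.mul_diagonal]
      simp only [hUdef, Matrix.of_apply]
      have hre : (∑ d : G, (m d : ℂ) * K c (d + g))
          = ∑ h : G, (m (h - g) : ℂ) * K c h := by
        refine Fintype.sum_bijective (Equiv.addRight g) (Equiv.addRight g).bijective _ _ ?_
        intro d
        simp [add_sub_cancel_right]
      rw [← hre]
      rw [show (∑ d : G, (m d : ℂ) * K c (d + g))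
          = (∑ d : G, K c d * (m d : ℂ)) * K c g by
        rw [Finset.sum_mul]; exact Finset.sum_congr rfl fun d _ => by rw [hmulK]; ring]
      ring
    calc (Matrix.of fun g h : G => (m (h - g) : ℂ))
        = (Matrix.of fun g h : G => (m (h - g) : ℂ)) * (U * W) := by rw [hUW, Matrix.mul_one]
      _ = ((Matrix.of fun g h : G => (m (h - g) : ℂ)) * U) * W := by rw [Matrix.mul_assoc]
      _ = _ := by rw [h1]
  have hPd : P.map (algebraMap ℝ ℂ) =
      U * Matrix.diagonal (fun c => ((lam c : ℝ) : ℂ)) * W := by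
    have h2 : P.map (algebraMap ℝ ℂ) = Matrix.of fun g h : G => (f (h - g) : ℂ) := by
      ext g h; simp [Matrix.map_apply, hP g h, Complex.coe_algebraMap]
    rw [h2, hdiag f, show (fun c => ∑ d : G, K c d * (f d : ℂ)) = (fun c => ((lam c : ℝ) : ℂ))
      from funext hFhat]
  set Q : Matrix G G ℝ := Matrix.of fun g h : G => ψr (h - g) with hQdef
  have hQd : (NormedSpace.exp Q).map (algebraMap ℝ ℂ) =
      U * Matrix.diagonal (fun c => Complex.exp (∑ d : G, K c d * (ψr d : ℂ))) * W := by
    rw [expMapAux]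
    have h2 : Q.map (algebraMap ℝ ℂ) = Matrix.of fun g h : G => (ψr (h - g) : ℂ) := by
      ext g h; simp [Matrix.map_apply, hQdef, Complex.coe_algebraMap]
    rw [h2, hdiag ψr]
    set Uu : (Matrix G G ℂ)ˣ := ⟨U, W, hUW, hWU⟩ with hUu
    have h3 := Matrix.exp_units_conj Uu
      (Matrix.diagonal (fun c => ∑ d : G, K c d * (ψr d : ℂ)))
    have h4 : (↑Uu : Matrix G G ℂ) = U := rfl
    have h5 : (↑Uu⁻¹ : Matrix G G ℂ) = W := rfl
    rw [h4, h5] at h3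
    rw [h3, Matrix.exp_diagonal, Pi.exp_def]
    rw [show (fun i => NormedSpace.exp (∑ d : G, K i d * (ψr d : ℂ)))
      = (fun c => Complex.exp (∑ d : G, K c d * (ψr d : ℂ))) from funext fun c => by
        rw [Complex.exp_eq_exp_ℂ]]
  constructor
  · intro hPeq
    have hmapeq : P.map (algebraMap ℝ ℂ) = (NormedSpace.exp Q).map (algebraMap ℝ ℂ) := by
      rw [← hPeq]
    rw [hPd, hQd] at hmapeq
    have hDD : Matrix.diagonal (fun c => ((lam c : ℝ) : ℂ)) =
        Matrix.diagonal (fun c => Complex.exp (∑ d : G, K c d * (ψr d : ℂ))) := by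
      have h6 := congrArg (fun M => W * M * U) hmapeq
      simpa only [Matrix.mul_assoc, ← Matrix.mul_assoc W U, hWU, Matrix.one_mul,
        hUW, Matrix.mul_one] using h6
    intro c
    have := congrFun (congrFun hDD c) c
    simpa [Matrix.diagonal_apply_eq] using this
  · intro hc
    have hDD : Matrix.diagonal (fun c => ((lam c : ℝ) : ℂ)) =
        Matrix.diagonal (fun c => Complex.exp (∑ d : G, K c d * (ψr d : ℂ))) := by
      rw [show (fun c => ((lam c : ℝ) : ℂ))
        = (fun c => Complex.exp (∑ d : G, K c d * (ψr d : ℂ))) from funext hc]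
    have hmapeq : P.map (algebraMap ℝ ℂ) = (NormedSpace.exp Q).map (algebraMap ℝ ℂ) := by
      rw [hPd, hQd, hDD]
    ext g h
    have := congrFun (congrFun hmapeq g) h
    simpa [Matrix.map_apply, Complex.coe_algebraMap] using this

set_option maxHeartbeats 1000000 in
/-- Main theorem: a `(G, L)`-Markov matrix `P` (for a symmetric `G`-compatible labeling `L`)
is `(G, L)`-embeddable, i.e. `P = exp Q` for some `(G, L)`-rate matrix `Q`, if and only if
its vector of eigenvalues `lam` (given by the discrete Fourier transform of `f`) satisfies:
`lam 0 = 1`, `lam g > 0` for all `g`, `lam g = lam h` whenever `L g = L h`, and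
`∏ h, (lam h) ^ Re (K g h) ≥ 1` for every nonzero `g`. -/
theorem model_embeddability_symmetric_group_based
    {G : Type*} [AddCommGroup G] [Fintype G] [DecidableEq G]
    {𝓛 : Type*} [Fintype 𝓛]
    (e : G → AddChar G ℂ) (he : Function.Bijective e)
    (hmul : ∀ g h : G, e (g + h) = e g * e h)
    (K : Matrix G G ℂ) (hK : ∀ g h : G, K g h = e g h)
    (L : G → 𝓛) (hLsym : ∀ g : G, L (-g) = L g)
    (hcompat : ∀ (x : 𝓛 → ℂ) (g h : G), L g = L h →
      (∑ k : G, K g k * x (L k) = ∑ k : G, K h k * x (L k)) ∧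
      (∑ k : G, (starRingEnd ℂ) (K g k) * x (L k) =
        ∑ k : G, (starRingEnd ℂ) (K h k) * x (L k)))
    (f : G → ℝ) (hfsum : ∑ g : G, f g = 1) (hfnonneg : ∀ g : G, 0 ≤ f g)
    (hfsym : ∀ g : G, f (-g) = f g) (hflabel : ∀ g h : G, L g = L h → f g = f h)
    (P : Matrix G G ℝ) (hP : ∀ g h : G, P g h = f (h - g))
    (lam : G → ℝ) (hlam : ∀ g : G, lam g = (∑ h : G, K g h * (f h : ℂ)).re) :
    (∃ ψ : G → ℝ, (∑ g : G, ψ g = 0) ∧ (∀ g : G, g ≠ 0 → 0 ≤ ψ g) ∧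
      (∀ g h : G, L g = L h → ψ g = ψ h) ∧
      P = NormedSpace.exp (Matrix.of fun g h : G => ψ (h - g))) ↔
    (lam 0 = 1 ∧ (∀ g : G, 0 < lam g) ∧ (∀ g h : G, L g = L h → lam g = lam h) ∧
      ∀ g : G, g ≠ 0 → 1 ≤ ∏ h : G, lam h ^ (K g h).re) := by
  classical
  obtain ⟨σ, hσ, hσ0⟩ := hsigma e he hmul
  have hn : (Fintype.card G : ℂ) ≠ 0 := by simp [Fintype.card_ne_zero]
  have hnR : (0:ℝ) < (Fintype.card G : ℝ) := by
    exact_mod_cast Fintype.card_pos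
  -- K-level facts
  have hKconj : ∀ g h : G, (starRingEnd ℂ) (K g h) = K g (-h) := by
    intro g h; rw [hK, hK]; exact hconj e g h
  have hKneg : ∀ g h : G, K (-g) h = (starRingEnd ℂ) (K g h) := by
    intro g h
    rw [hKconj, hK, hK]
    have h1 : e (-g) h * e g h = 1 := by
      rw [← AddChar.mul_apply, ← hmul, neg_add_cancel, he0 e hmul, AddChar.one_apply]
    rw [AddChar.map_neg_eq_inv]
    exact eq_inv_of_mul_eq_one_left h1
  have hσK : ∀ m g : G, K (σ m) g = K g m := by
    intro m g; rw [hK, hK]; exact hσ m g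
  have hrowK : ∀ g : G, (∑ h : G, K g h) = if g = 0 then (Fintype.card G : ℂ) else 0 := by
    intro g
    rw [show (∑ h : G, K g h) = ∑ h : G, e g h from Finset.sum_congr rfl fun h _ => hK g h]
    exact hrow0 e he hmul g
  have horthK : ∀ g g' : G, (∑ h : G, K g h * (starRingEnd ℂ) (K g' h)) =
      if g = g' then (Fintype.card G : ℂ) else 0 := by
    intro g g'
    rw [show (∑ h : G, K g h * (starRingEnd ℂ) (K g' h))
      = ∑ h : G, e g h * (starRingEnd ℂ) (e g' h) from
      Finset.sum_congr rfl fun h _ => by rw [hK, hK]]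
    exact horth e he hmul g g'
  have horthcK : ∀ a b : G, (∑ g : G, (starRingEnd ℂ) (K g a) * K g b) =
      if a = b then (Fintype.card G : ℂ) else 0 := by
    intro a b
    rw [show (∑ g : G, (starRingEnd ℂ) (K g a) * K g b)
      = ∑ g : G, e (σ b) g * (starRingEnd ℂ) (e (σ a) g) from
      Finset.sum_congr rfl fun g _ => by
        rw [hK, hK, ← hσ a g, ← hσ b g]; ring]
    rw [horth e he hmul (σ b) (σ a)]
    by_cases hab : a = b
    · simp [hab]
    · rw [if_neg (fun hcon => hab (σ.injective hcon).symm), if_neg hab]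
  have hmulK : ∀ c d g : G, K c (d + g) = K c d * K c g := by
    intro c d g; rw [hK, hK, hK]; exact AddChar.map_add_eq_mul _ _ _
  -- realness of transforms of symmetric vectors
  have hreal : ∀ v : G → ℝ, (∀ g : G, v (-g) = v g) → ∀ c : G,
      (∑ d : G, K c d * (v d : ℂ)) = (((∑ d : G, K c d * (v d : ℂ)).re : ℝ) : ℂ) := by
    intro v hv c
    have hconjsum : (starRingEnd ℂ) (∑ d : G, K c d * (v d : ℂ)) =
        ∑ d : G, K c d * (v d : ℂ) := by
      rw [map_sum]
      rw [show (∑ d : G, (starRingEnd ℂ) (K c d * (v d : ℂ)))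
        = ∑ d : G, K c (-d) * ((v (-d) : ℝ) : ℂ) from
        Finset.sum_congr rfl fun d _ => by
          rw [map_mul, Complex.conj_ofReal, hKconj, hv]]
      exact Fintype.sum_bijective (Equiv.neg G) (Equiv.neg G).bijective _ _ (fun d => by simp)
    exact ((Complex.conj_eq_iff_re).mp hconjsum).symm
  have hFhat : ∀ c : G, (∑ h : G, K c h * (f h : ℂ)) = ((lam c : ℝ) : ℂ) := by
    intro c
    rw [hlam c]
    exact hreal f hfsym c
  -- unconditional facts about lam
  have hlam0 : lam 0 = 1 := by
    have h1 : ∀ h : G, K 0 h = 1 := fun h => by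
      rw [hK, he0 e hmul]; exact AddChar.one_apply _
    rw [hlam 0]
    rw [show (∑ h : G, K 0 h * (f h : ℂ)) = ∑ h : G, ((f h : ℝ) : ℂ) from
      Finset.sum_congr rfl fun h _ => by rw [h1 h, one_mul]]
    rw [← Complex.ofReal_sum, hfsum]
    simp
  have hlamlabel : ∀ g h : G, L g = L h → lam g = lam h := by
    intro a b hab
    obtain ⟨x, hx⟩ : ∃ x : 𝓛 → ℂ, ∀ k : G, x (L k) = (f k : ℂ) := by
      refine ⟨fun l => if hl : ∃ k : G, L k = l then (f hl.choose : ℂ) else 0, fun k => ?_⟩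
      have hk : ∃ k' : G, L k' = L k := ⟨k, rfl⟩
      exact (dif_pos hk).trans (congrArg (fun r : ℝ => (r : ℂ)) (hflabel _ _ hk.choose_spec))
    have h1 := (hcompat x a b hab).1
    rw [hlam a, hlam b]
    rw [show (∑ h : G, K a h * (f h : ℂ)) = ∑ k : G, K a k * x (L k) from
      Finset.sum_congr rfl fun k _ => by rw [hx k]]
    rw [show (∑ h : G, K b h * (f h : ℂ)) = ∑ k : G, K b k * x (L k) from
      Finset.sum_congr rfl fun k _ => by rw [hx k]]
    rw [h1]
  have key := fun ψr : G → ℝ => keyAux K horthK horthcK hmulK P f hP lam hFhat ψr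
  constructor
  · rintro ⟨ψ, hψsum, hψpos, hψlab, hψexp⟩
    have hkey := (key ψ).mp hψexp
    have hψsym : ∀ g : G, ψ (-g) = ψ g := fun g => hψlab _ _ (hLsym g)
    set rψ : G → ℝ := fun c => (∑ d : G, K c d * (ψ d : ℂ)).re with hrψ
    have hψhat : ∀ c : G, (∑ d : G, K c d * (ψ d : ℂ)) = ((rψ c : ℝ) : ℂ) :=
      fun c => hreal ψ hψsym c
    have hlamexp : ∀ c : G, lam c = Real.exp (rψ c) := by
      intro c
      have h1 := hkey c
      rw [hψhat c, ← Complex.ofReal_exp] at h1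
      exact_mod_cast h1
    have hlampos : ∀ c : G, 0 < lam c := fun c => (hlamexp c) ▸ Real.exp_pos _
    refine ⟨hlam0, hlampos, hlamlabel, ?_⟩
    intro g hg
    set d0 : G := σ.symm (-g) with hd0def
    have hd0 : d0 ≠ 0 := by
      intro hcon
      apply hg
      have h5 : σ d0 = -g := σ.apply_symm_apply (-g)
      rw [hcon, hσ0] at h5
      simpa using h5.symm
    have hT2 : ∀ d : G, (∑ h : G, K g h * K h d) =
        if d = d0 then (Fintype.card G : ℂ) else 0 := by
      intro d
      rw [show (∑ h : G, K g h * K h d) = ∑ h : G, K (g + σ d) h from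
        Finset.sum_congr rfl fun h _ => by
          rw [← hσK d h, hK, hK, hK, hmul, AddChar.mul_apply]]
      rw [hrowK (g + σ d)]
      congr 1
      simp only [eq_iff_iff]
      constructor
      · intro hzero
        have : σ d = -g := by linear_combination (norm := abel) hzero
        rw [hd0def, ← this, Equiv.symm_apply_apply]
      · intro hdd
        rw [hdd, hd0def, σ.apply_symm_apply]
        abel
    have hT : (∑ h : G, K g h * ((rψ h : ℝ) : ℂ))
        = (Fintype.card G : ℂ) * ((ψ d0 : ℝ) : ℂ) := by
      rw [show (∑ h : G, K g h * ((rψ h : ℝ) : ℂ))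
        = ∑ h : G, K g h * (∑ d : G, K h d * (ψ d : ℂ)) from
        Finset.sum_congr rfl fun h _ => by rw [hψhat h]]
      rw [show (∑ h : G, K g h * (∑ d : G, K h d * (ψ d : ℂ)))
        = ∑ d : G, (∑ h : G, K g h * K h d) * (ψ d : ℂ) from
        calc (∑ h : G, K g h * (∑ d : G, K h d * (ψ d : ℂ)))
            = ∑ h : G, ∑ d : G, K g h * K h d * (ψ d : ℂ) :=
              Finset.sum_congr rfl fun h _ => by
                rw [Finset.mul_sum]; exact Finset.sum_congr rfl fun d _ => by ring
          _ = ∑ d : G, ∑ h : G, K g h * K h d * (ψ d : ℂ) := Finset.sum_comm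
          _ = ∑ d : G, (∑ h : G, K g h * K h d) * (ψ d : ℂ) :=
              Finset.sum_congr rfl fun d _ => by rw [Finset.sum_mul]]
      rw [show (∑ d : G, (∑ h : G, K g h * K h d) * (ψ d : ℂ))
        = ∑ d : G, (if d = d0 then (Fintype.card G : ℂ) else 0) * (ψ d : ℂ) from
        Finset.sum_congr rfl fun d _ => by rw [hT2 d]]
      rw [show (∑ d : G, (if d = d0 then (Fintype.card G : ℂ) else 0) * (ψ d : ℂ))
        = ∑ d : G, (if d = d0 then (Fintype.card G : ℂ) * (ψ d : ℂ) else 0) from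
        Finset.sum_congr rfl fun d _ => by split <;> simp]
      rw [Finset.sum_ite_eq' Finset.univ d0 (fun d => (Fintype.card G : ℂ) * (ψ d : ℂ))]
      simp
    have hS : (∑ h : G, rψ h * (K g h).re) = (Fintype.card G : ℝ) * ψ d0 := by
      have h6 := congrArg Complex.re hT
      rw [Complex.re_sum] at h6
      rw [show (∑ h : G, (K g h * ((rψ h : ℝ) : ℂ)).re) = ∑ h : G, rψ h * (K g h).re from
        Finset.sum_congr rfl fun h _ => by
          simp [Complex.mul_re]; ring] at h6
      rw [show ((Fintype.card G : ℂ) * ((ψ d0 : ℝ) : ℂ)).re = (Fintype.card G : ℝ) * ψ d0 by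
        rw [show ((Fintype.card G : ℂ)) = ((Fintype.card G : ℝ) : ℂ) by push_cast; rfl,
          ← Complex.ofReal_mul, Complex.ofReal_re]] at h6
      exact h6
    have hprod : (∏ h : G, lam h ^ (K g h).re)
        = Real.exp (∑ h : G, rψ h * (K g h).re) := by
      rw [Real.exp_sum]
      refine Finset.prod_congr rfl fun h _ => ?_
      rw [Real.rpow_def_of_pos (hlampos h), hlamexp h, Real.log_exp]
    rw [hprod, hS]
    exact Real.one_le_exp (mul_nonneg (le_of_lt hnR) (hψpos d0 hd0))
  · rintro ⟨h1, h2, h3, h4⟩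
    set μ : G → ℝ := fun g => Real.log (lam g) with hμdef
    have hμ0 : μ 0 = 0 := by rw [hμdef]; simp [h1]
    have hlamneg : ∀ g : G, lam (-g) = lam g := by
      intro g
      have h5 : ((lam (-g) : ℝ) : ℂ) = ((lam g : ℝ) : ℂ) := by
        rw [← hFhat (-g), ← hFhat g]
        rw [show (∑ h : G, K (-g) h * (f h : ℂ))
          = ∑ h : G, (starRingEnd ℂ) (K g h * (f h : ℂ)) from
          Finset.sum_congr rfl fun h _ => by
            rw [map_mul, Complex.conj_ofReal, hKneg]]
        rw [← map_sum, hFhat g, Complex.conj_ofReal]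
      exact_mod_cast h5
    have hμneg : ∀ g : G, μ (-g) = μ g := fun g => by rw [hμdef]; simp [hlamneg g]
    have hμlabel : ∀ a b : G, L a = L b → μ a = μ b := fun a b hab => by
      rw [hμdef]; simp [h3 a b hab]
    -- inverse transform
    set y : G → ℂ := fun k => ∑ g : G, (starRingEnd ℂ) (K g k) * (μ g : ℂ) with hydef
    have hyreal : ∀ k : G, ((y k).re : ℂ) = y k := by
      intro k
      refine Complex.conj_eq_iff_re.mp ?_
      have hc1 : (starRingEnd ℂ) (y k) = ∑ g : G, K g k * (μ g : ℂ) := by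
        rw [hydef, map_sum]
        exact Finset.sum_congr rfl fun g _ => by
          rw [map_mul, Complex.conj_conj, Complex.conj_ofReal]
      have hc2 : y k = ∑ g : G, K g k * (μ g : ℂ) := by
        rw [hydef]
        calc (∑ g : G, (starRingEnd ℂ) (K g k) * (μ g : ℂ))
            = ∑ g : G, K (-g) k * ((μ (-g) : ℝ) : ℂ) :=
              Finset.sum_congr rfl fun g _ => by rw [hKneg, hμneg]
          _ = ∑ g : G, K g k * ((μ g : ℝ) : ℂ) :=
              Fintype.sum_bijective (Equiv.neg G) (Equiv.neg G).bijective _ _ (fun g => by simp)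
      rw [hc1, ← hc2]
    set ψ : G → ℝ := fun k => (Fintype.card G : ℝ)⁻¹ * (y k).re with hψdef
    have hψC : ∀ k : G, ((ψ k : ℝ) : ℂ) = (Fintype.card G : ℂ)⁻¹ * y k := by
      intro k
      rw [hψdef]
      push_cast
      rw [hyreal k]
    -- sum zero
    have hysum : (∑ k : G, y k) = 0 := by
      rw [hydef]
      rw [Finset.sum_comm]
      rw [show (∑ g : G, ∑ k : G, (starRingEnd ℂ) (K g k) * (μ g : ℂ))
        = ∑ g : G, (starRingEnd ℂ) (∑ k : G, K g k) * (μ g : ℂ) from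
        Finset.sum_congr rfl fun g _ => by rw [map_sum, Finset.sum_mul]]
      rw [show (∑ g : G, (starRingEnd ℂ) (∑ k : G, K g k) * (μ g : ℂ))
        = ∑ g : G, (if g = 0 then (Fintype.card G : ℂ) else 0) * (μ g : ℂ) from
        Finset.sum_congr rfl fun g _ => by
          rw [hrowK g]; split <;> simp]
      rw [show (∑ g : G, (if g = 0 then (Fintype.card G : ℂ) else 0) * (μ g : ℂ))
        = ∑ g : G, (if g = 0 then (Fintype.card G : ℂ) * (μ g : ℂ) else 0) from
        Finset.sum_congr rfl fun g _ => by split <;> simp]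
      rw [Finset.sum_ite_eq' Finset.univ (0 : G) (fun g => (Fintype.card G : ℂ) * (μ g : ℂ))]
      simp [hμ0]
    have hψsum : (∑ k : G, ψ k) = 0 := by
      have h5 : ((∑ k : G, ψ k : ℝ) : ℂ) = 0 := by
        push_cast [hψC]
        rw [← Finset.mul_sum, hysum, mul_zero]
      exact_mod_cast h5
    -- nonnegativity
    have hψpos : ∀ k : G, k ≠ 0 → 0 ≤ ψ k := by
      intro k hk
      set g0 : G := σ (-k) with hg0def
      have hg0 : g0 ≠ 0 := by
        intro hcon
        rw [hg0def, ← hσ0] at hcon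
        exact hk (by simpa using σ.injective hcon)
      have hyk : y k = ∑ g : G, K g0 g * (μ g : ℂ) := by
        rw [hydef]
        exact Finset.sum_congr rfl fun g _ => by rw [hKconj, ← hσK (-k) g]
      have hre : (y k).re = ∑ g : G, (K g0 g).re * μ g := by
        rw [hyk, Complex.re_sum]
        exact Finset.sum_congr rfl fun g _ => by simp [Complex.mul_re]
      have h5 := h4 g0 hg0
      rw [show (∏ h : G, lam h ^ (K g0 h).re)
          = Real.exp (∑ h : G, (K g0 h).re * μ h) by
        rw [Real.exp_sum]
        refine Finset.prod_congr rfl fun h _ => ?_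
        rw [Real.rpow_def_of_pos (h2 h), hμdef]
        ring_nf] at h5
      have h6 : 0 ≤ ∑ h : G, (K g0 h).re * μ h := by
        by_contra hneg
        push_neg at hneg
        have := Real.exp_lt_exp.mpr hneg
        rw [Real.exp_zero] at this
        linarith
      rw [hψdef]
      refine mul_nonneg (inv_nonneg.mpr (le_of_lt hnR)) ?_
      rw [hre]
      exact le_of_le_of_eq h6 (Finset.sum_congr rfl fun h _ => by ring)
    -- label constancy via the subspace argument
    have hyV : ∀ k k' : G, L k = L k' → y k = y k' := by
      let V : Submodule ℂ (G → ℂ) :=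
        { carrier := {x : G → ℂ | ∀ a b : G, L a = L b → x a = x b}
          add_mem' := fun {x1} {x2} hx1 hx2 a b hab => by
            simp only [Pi.add_apply]
            rw [hx1 a b hab, hx2 a b hab]
          zero_mem' := fun a b hab => rfl
          smul_mem' := fun c {x1} hx1 a b hab => by
            simp only [Pi.smul_apply]
            rw [hx1 a b hab] }
      have hNx : ∀ (z : G → ℂ) (a : G), (∑ g : G, (starRingEnd ℂ) (K g a) * (K.mulVec z) g)
          = (Fintype.card G : ℂ) * z a := by
        intro z a
        calc (∑ g : G, (starRingEnd ℂ) (K g a) * (K.mulVec z) g)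
            = ∑ g : G, ∑ kk : G, (starRingEnd ℂ) (K g a) * K g kk * z kk := by
              refine Finset.sum_congr rfl fun g _ => ?_
              simp only [Matrix.mulVec, dotProduct]
              rw [Finset.mul_sum]
              exact Finset.sum_congr rfl fun kk _ => by ring
          _ = ∑ kk : G, (∑ g : G, (starRingEnd ℂ) (K g a) * K g kk) * z kk := by
              rw [Finset.sum_comm]
              exact Finset.sum_congr rfl fun kk _ => by rw [Finset.sum_mul]
          _ = ∑ kk : G, (if a = kk then (Fintype.card G : ℂ) else 0) * z kk :=
              Finset.sum_congr rfl fun kk _ => by rw [horthcK a kk]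
          _ = ∑ kk : G, (if kk = a then (Fintype.card G : ℂ) * z kk else 0) :=
              Finset.sum_congr rfl fun kk _ => by
                by_cases hak : a = kk
                · simp [hak]
                · simp [hak, Ne.symm hak]
          _ = (Fintype.card G : ℂ) * z a := by
              rw [Finset.sum_ite_eq' Finset.univ a (fun kk => (Fintype.card G : ℂ) * z kk)]
              simp
      have hmaps : ∀ x ∈ V, K.mulVecLin x ∈ V := by
        intro x hx a b hab
        obtain ⟨x', hx'⟩ : ∃ x' : 𝓛 → ℂ, ∀ k : G, x' (L k) = x k := by
          refine ⟨fun l => if hl : ∃ k : G, L k = l then x hl.choose else 0, fun k => ?_⟩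
          have hk : ∃ k' : G, L k' = L k := ⟨k, rfl⟩
          exact (dif_pos hk).trans (hx _ _ hk.choose_spec)
        have h5 := (hcompat x' a b hab).1
        show (K.mulVec x) a = (K.mulVec x) b
        simp only [Matrix.mulVec, dotProduct]
        calc (∑ k : G, K a k * x k) = ∑ k : G, K a k * x' (L k) :=
              Finset.sum_congr rfl fun k _ => by rw [hx' k]
          _ = ∑ k : G, K b k * x' (L k) := h5
          _ = ∑ k : G, K b k * x k := Finset.sum_congr rfl fun k _ => by rw [hx' k]
      have hinj : Function.Injective (K.mulVecLin.restrict hmaps) := by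
        intro u v huv
        apply Subtype.ext
        have h6 : K.mulVec u.1 = K.mulVec v.1 := congrArg Subtype.val huv
        funext a
        have h7 := hNx u.1 a
        rw [h6, hNx v.1 a] at h7
        exact mul_left_cancel₀ hn h7.symm
      have hsurj := LinearMap.injective_iff_surjective.mp hinj
      have hμV : (fun g : G => (μ g : ℂ)) ∈ V := fun a b hab => by
        simp only
        rw [hμlabel a b hab]
      obtain ⟨ν, hν⟩ := hsurj ⟨fun g : G => (μ g : ℂ), hμV⟩
      have hν1 : K.mulVec ν.1 = fun g : G => (μ g : ℂ) := congrArg Subtype.val hν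
      intro k k' hkk
      have hyk : ∀ j : G, y j = (Fintype.card G : ℂ) * ν.1 j := by
        intro j
        rw [hydef]
        calc (∑ g : G, (starRingEnd ℂ) (K g j) * (μ g : ℂ))
            = ∑ g : G, (starRingEnd ℂ) (K g j) * (K.mulVec ν.1) g := by
              rw [hν1]
          _ = (Fintype.card G : ℂ) * ν.1 j := hNx ν.1 j
      rw [hyk k, hyk k', ν.2 k k' hkk]
    have hψlab : ∀ a b : G, L a = L b → ψ a = ψ b := by
      intro a b hab
      rw [hψdef]
      simp only
      rw [hyV a b hab]
    -- the exponential identity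
    refine ⟨ψ, hψsum, hψpos, hψlab, (key ψ).mpr ?_⟩
    intro c
    have h5 : (∑ d : G, K c d * (ψ d : ℂ)) = ((μ c : ℝ) : ℂ) := by
      rw [show (∑ d : G, K c d * (ψ d : ℂ))
        = (Fintype.card G : ℂ)⁻¹ * ∑ d : G, K c d * y d by
        rw [Finset.mul_sum]
        exact Finset.sum_congr rfl fun d _ => by rw [hψC d]; ring]
      rw [show (∑ d : G, K c d * y d) = (Fintype.card G : ℂ) * (μ c : ℂ) by
        rw [hydef]
        calc (∑ d : G, K c d * ∑ g : G, (starRingEnd ℂ) (K g d) * (μ g : ℂ))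
            = ∑ d : G, ∑ g : G, K c d * (starRingEnd ℂ) (K g d) * (μ g : ℂ) := by
              refine Finset.sum_congr rfl fun d _ => ?_
              rw [Finset.mul_sum]
              exact Finset.sum_congr rfl fun g _ => by ring
          _ = ∑ g : G, (∑ d : G, K c d * (starRingEnd ℂ) (K g d)) * (μ g : ℂ) := by
              rw [Finset.sum_comm]
              exact Finset.sum_congr rfl fun g _ => by rw [Finset.sum_mul]
          _ = ∑ g : G, (if c = g then (Fintype.card G : ℂ) else 0) * (μ g : ℂ) :=
              Finset.sum_congr rfl fun g _ => by rw [horthK c g]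
          _ = ∑ g : G, (if g = c then (Fintype.card G : ℂ) * (μ g : ℂ) else 0) :=
              Finset.sum_congr rfl fun g _ => by
                by_cases hgc : c = g
                · simp [hgc]
                · simp [hgc, Ne.symm hgc]
          _ = (Fintype.card G : ℂ) * (μ c : ℂ) := by
              rw [Finset.sum_ite_eq' Finset.univ c (fun g => (Fintype.card G : ℂ) * (μ g : ℂ))]
              simp]
      rw [← mul_assoc, inv_mul_cancel₀ hn, one_mul]
    rw [h5, ← Complex.ofReal_exp]
    rw [hμdef]
    simp only
    rw [Real.exp_log (h2 c)]
end

section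
/- Let a, b ∈ ℝ with a ≥ 0, b ≥ 0 and a + b = 1, and let P be the 2×2 real matrix with rows (a, b) and (b, a) (a CFN Markov matrix). Then there exists q ≥ 0 such that P = exp(Q), where Q is the 2×2 matrix with rows (−q, q) and (q, −q) (a CFN rate matrix), if and only if a − b > 0. -/
open Matrix

noncomputable def Umat : (Matrix (Fin 2) (Fin 2) ℝ)ˣ where
  val := !![1, 1; 1, -1]
  inv := !![1/2, 1/2; 1/2, -1/2]
  val_inv := by norm_num [Matrix.mul_fin_two, ← Matrix.one_fin_two]
  inv_val := by norm_num [Matrix.mul_fin_two, ← Matrix.one_fin_two]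

lemma exp_cfn (q : ℝ) : NormedSpace.exp !![-q, q; q, -q] =
    !![(1 + Real.exp (-2*q))/2, (1 - Real.exp (-2*q))/2;
       (1 - Real.exp (-2*q))/2, (1 + Real.exp (-2*q))/2] := by
  have hdiag : (Matrix.diagonal ![(0:ℝ), -2*q]) = !![0, 0; 0, -2*q] := by
    ext i j; fin_cases i <;> fin_cases j <;> simp [Matrix.diagonal]
  have hconj : !![-q, q; q, -q] =
      (Umat : Matrix (Fin 2) (Fin 2) ℝ) * (Matrix.diagonal ![(0:ℝ), -2*q] : Matrix (Fin 2) (Fin 2) ℝ) * (↑(Umat⁻¹) : Matrix (Fin 2) (Fin 2) ℝ) := by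
    rw [hdiag]
    show _ = Umat.val * _ * Umat.inv
    simp only [Umat, Matrix.mul_fin_two]
    norm_num; ring_nf
  rw [hconj, Matrix.exp_units_conj, Matrix.exp_diagonal]
  have hv : NormedSpace.exp ![(0:ℝ), -2*q] = ![(1:ℝ), Real.exp (-2*q)] := by
    ext i
    rw [Pi.exp_def]
    fin_cases i
    · simp [NormedSpace.exp_zero]
    · simpa using congrFun Real.exp_eq_exp_ℝ (-2*q) |>.symm
  rw [hv]
  have hdiag2 : (Matrix.diagonal ![(1:ℝ), Real.exp (-2*q)]) = !![1, 0; 0, Real.exp (-2*q)] := by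
    ext i j; fin_cases i <;> fin_cases j <;> simp [Matrix.diagonal]
  rw [hdiag2]
  show Umat.val * _ * Umat.inv = _
  simp only [Umat, Matrix.mul_fin_two]
  norm_num; ring_nf
  simp

/-- A CFN Markov matrix with rows `(a, b)` and `(b, a)` is CFN embeddable, i.e. the matrix
exponential of a CFN rate matrix, if and only if `a - b > 0`. -/
theorem cfn_embeddable_iff (a b : ℝ) (ha : 0 ≤ a) (hb : 0 ≤ b) (hab : a + b = 1) :
    (∃ q : ℝ, 0 ≤ q ∧ !![a, b; b, a] = NormedSpace.exp !![-q, q; q, -q]) ↔ 0 < a - b := by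
  constructor
  · rintro ⟨q, hq, hP⟩
    rw [exp_cfn] at hP
    have h00 := congrArg (fun M : Matrix (Fin 2) (Fin 2) ℝ => M 0 0) hP
    have h01 := congrArg (fun M : Matrix (Fin 2) (Fin 2) ℝ => M 0 1) hP
    simp at h00 h01
    have := Real.exp_pos (-(2*q))
    linarith
  · intro hpos
    refine ⟨-(Real.log (a - b))/2, ?_, ?_⟩
    · have h1 : a - b ≤ 1 := by linarith
      have := Real.log_nonpos (by linarith) h1
      linarith
    · rw [exp_cfn]
      have he : Real.exp (-2 * (-(Real.log (a - b))/2)) = a - b := by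
        rw [show -2 * (-(Real.log (a - b))/2) = Real.log (a - b) by ring,
          Real.exp_log hpos]
      rw [he, show (1 + (a - b))/2 = a by linarith, show (1 - (a - b))/2 = b by linarith]
end

section
/- Let a, b, c, d ∈ ℝ with a, b, c, d ≥ 0 and a + b + c + d = 1, and let P be the 4×4 real matrix with rows (a,b,c,d), (b,a,d,c), (c,d,a,b), (d,c,b,a) (a Kimura 3-parameter Markov matrix). Set λ₁ = a − b + c − d, λ₂ = a + b − c − d, λ₃ = a − b − c + d (the nonunit eigenvalues of P). Then there exist β, γ, δ ≥ 0 such that P = exp(Q), where Q is the 4×4 matrix with rows (α,β,γ,δ), (β,α,δ,γ), (γ,δ,α,β), (δ,γ,β,α) and α = −(β+γ+δ) (a Kimura 3-parameter rate matrix), if and only if λ₁ > 0, λ₂ > 0, λ₃ > 0, λ₂·λ₃ ≤ λ₁, λ₁·λ₃ ≤ λ₂, and λ₁·λ₂ ≤ λ₃. -/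
open Matrix

noncomputable section K3PAux

/-- The Hadamard-type matrix diagonalizing all K3P matrices. -/
private def Hm : Matrix (Fin 4) (Fin 4) ℝ :=
  !![1,1,1,1; 1,-1,1,-1; 1,1,-1,-1; 1,-1,-1,1]

/-- The inverse of `Hm`. -/
private def Hi : Matrix (Fin 4) (Fin 4) ℝ :=
  !![4⁻¹,4⁻¹,4⁻¹,4⁻¹; 4⁻¹,-4⁻¹,4⁻¹,-4⁻¹; 4⁻¹,4⁻¹,-4⁻¹,-4⁻¹; 4⁻¹,-4⁻¹,-4⁻¹,4⁻¹]

private lemma H_mul : Hm * Hi = 1 := by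
  ext i j
  fin_cases i <;> fin_cases j <;>
    norm_num [Hm, Hi, Matrix.mul_apply, Fin.sum_univ_four, Matrix.one_apply,
      Matrix.vecHead, Matrix.vecTail, Fin.ext_iff, Matrix.cons_val_two,
        Matrix.cons_val_three]

private lemma mul_H : Hi * Hm = 1 := by
  ext i j
  fin_cases i <;> fin_cases j <;>
    norm_num [Hm, Hi, Matrix.mul_apply, Fin.sum_univ_four, Matrix.one_apply,
      Matrix.vecHead, Matrix.vecTail, Fin.ext_iff, Matrix.cons_val_two,
        Matrix.cons_val_three]

private def Hu : (Matrix (Fin 4) (Fin 4) ℝ)ˣ := ⟨Hm, Hi, H_mul, mul_H⟩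

private lemma diag4 (s t u v : ℝ) :
    Matrix.diagonal ![s,t,u,v] = !![s,0,0,0; 0,t,0,0; 0,0,u,0; 0,0,0,v] := by
  ext i j
  fin_cases i <;> fin_cases j <;>
    norm_num [Matrix.diagonal_apply, Matrix.vecHead, Matrix.vecTail, Fin.ext_iff]

set_option maxHeartbeats 1000000 in
private lemma Mdecomp (x y z w : ℝ) :
    !![x, y, z, w; y, x, w, z; z, w, x, y; w, z, y, x] =
      Hm * Matrix.diagonal ![x+y+z+w, x-y+z-w, x+y-z-w, x-y-z+w] * Hi := by
  rw [diag4]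
  ext i j
  fin_cases i <;> fin_cases j <;>
    · norm_num [Hm, Hi, Matrix.mul_apply, Fin.sum_univ_four, Matrix.vecHead, Matrix.vecTail,
        Matrix.cons_val_two, Matrix.cons_val_three]
      ring

private lemma expM_diag (s t u v : ℝ) :
    NormedSpace.exp (Hm * Matrix.diagonal ![s,t,u,v] * Hi) =
      Hm * Matrix.diagonal ![Real.exp s, Real.exp t, Real.exp u, Real.exp v] * Hi := by
  have h := Matrix.exp_units_conj Hu (Matrix.diagonal ![s,t,u,v])
  have hv : (NormedSpace.exp (![s,t,u,v] : Fin 4 → ℝ)) =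
      ![Real.exp s, Real.exp t, Real.exp u, Real.exp v] := by
    funext i
    rw [Pi.coe_exp]
    fin_cases i <;> simp [Real.exp_eq_exp_ℝ, Matrix.vecHead, Matrix.vecTail]
  rw [show (↑Hu⁻¹ : Matrix (Fin 4) (Fin 4) ℝ) = Hi from rfl,
    show (↑Hu : Matrix (Fin 4) (Fin 4) ℝ) = Hm from rfl] at h
  rw [h, Matrix.exp_diagonal, hv]

/-- The matrix exponential of a K3P-patterned matrix, in closed form. -/
private lemma exp_M (x y z w p q r s : ℝ)
    (hp : 4*p = Real.exp (x+y+z+w) + Real.exp (x-y+z-w) + Real.exp (x+y-z-w) + Real.exp (x-y-z+w))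
    (hq : 4*q = Real.exp (x+y+z+w) - Real.exp (x-y+z-w) + Real.exp (x+y-z-w) - Real.exp (x-y-z+w))
    (hr : 4*r = Real.exp (x+y+z+w) + Real.exp (x-y+z-w) - Real.exp (x+y-z-w) - Real.exp (x-y-z+w))
    (hs : 4*s = Real.exp (x+y+z+w) - Real.exp (x-y+z-w) - Real.exp (x+y-z-w) + Real.exp (x-y-z+w)) :
    NormedSpace.exp !![x, y, z, w; y, x, w, z; z, w, x, y; w, z, y, x] =
      !![p, q, r, s; q, p, s, r; r, s, p, q; s, r, q, p] := by
  rw [Mdecomp x y z w, expM_diag, Mdecomp p q r s]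
  have hv : ![Real.exp (x+y+z+w), Real.exp (x-y+z-w), Real.exp (x+y-z-w), Real.exp (x-y-z+w)] =
      ![p+q+r+s, p-q+r-s, p+q-r-s, p-q-r+s] := by
    funext i
    fin_cases i <;> simp [Matrix.vecHead, Matrix.vecTail] <;> linarith
  rw [hv]

end K3PAux

/-- A Kimura 3-parameter Markov matrix is K3P embeddable, i.e. the matrix exponential of a
Kimura 3-parameter rate matrix, if and only if its nonunit eigenvalues
`λ₁ = a - b + c - d`, `λ₂ = a + b - c - d`, `λ₃ = a - b - c + d` are positive and satisfy
`λ₂λ₃ ≤ λ₁`, `λ₁λ₃ ≤ λ₂`, `λ₁λ₂ ≤ λ₃`. -/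
theorem k3p_embeddable_iff (a b c d : ℝ)
    (ha : 0 ≤ a) (hb : 0 ≤ b) (hc : 0 ≤ c) (hd : 0 ≤ d) (hsum : a + b + c + d = 1) :
    (∃ β γ δ : ℝ, 0 ≤ β ∧ 0 ≤ γ ∧ 0 ≤ δ ∧
      !![a, b, c, d; b, a, d, c; c, d, a, b; d, c, b, a] =
        NormedSpace.exp
          !![-(β + γ + δ), β, γ, δ;
             β, -(β + γ + δ), δ, γ;
             γ, δ, -(β + γ + δ), β;
             δ, γ, β, -(β + γ + δ)]) ↔
    (0 < a - b + c - d ∧ 0 < a + b - c - d ∧ 0 < a - b - c + d ∧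
      (a + b - c - d) * (a - b - c + d) ≤ a - b + c - d ∧
      (a - b + c - d) * (a - b - c + d) ≤ a + b - c - d ∧
      (a - b + c - d) * (a + b - c - d) ≤ a - b - c + d) := by
  constructor
  · rintro ⟨β, γ, δ, hβ, hγ, hδ, hP⟩
    set e1 := Real.exp (-(β + γ + δ) + β + γ + δ) with he1
    set e2 := Real.exp (-(β + γ + δ) - β + γ - δ) with he2
    set e3 := Real.exp (-(β + γ + δ) + β - γ - δ) with he3
    set e4 := Real.exp (-(β + γ + δ) - β - γ + δ) with he4
    rw [exp_M (-(β + γ + δ)) β γ δ ((e1+e2+e3+e4)/4) ((e1-e2+e3-e4)/4)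
      ((e1+e2-e3-e4)/4) ((e1-e2-e3+e4)/4) (by ring) (by ring) (by ring) (by ring)] at hP
    have h00 : a = (e1+e2+e3+e4)/4 := by
      have := congrFun (congrFun hP 0) 0
      simpa using this
    have h01 : b = (e1-e2+e3-e4)/4 := by
      have := congrFun (congrFun hP 0) 1
      simpa using this
    have h02 : c = (e1+e2-e3-e4)/4 := by
      have := congrFun (congrFun hP 0) 2
      simpa [Matrix.vecHead, Matrix.vecTail] using this
    have h03 : d = (e1-e2-e3+e4)/4 := by
      have := congrFun (congrFun hP 0) 3
      simpa [Matrix.vecHead, Matrix.vecTail] using this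
    have hl1 : a - b + c - d = e2 := by rw [h00, h01, h02, h03]; ring
    have hl2 : a + b - c - d = e3 := by rw [h00, h01, h02, h03]; ring
    have hl3 : a - b - c + d = e4 := by rw [h00, h01, h02, h03]; ring
    refine ⟨by rw [hl1]; exact Real.exp_pos _, by rw [hl2]; exact Real.exp_pos _,
      by rw [hl3]; exact Real.exp_pos _, ?_, ?_, ?_⟩
    · rw [hl1, hl2, hl3, he2, he3, he4, ← Real.exp_add]
      exact Real.exp_le_exp.2 (by linarith)
    · rw [hl1, hl2, hl3, he2, he3, he4, ← Real.exp_add]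
      exact Real.exp_le_exp.2 (by linarith)
    · rw [hl1, hl2, hl3, he2, he3, he4, ← Real.exp_add]
      exact Real.exp_le_exp.2 (by linarith)
  · rintro ⟨h1, h2, h3, h4, h5, h6⟩
    set l1 := a - b + c - d with hl1
    set l2 := a + b - c - d with hl2
    set l3 := a - b - c + d with hl3
    set B := (Real.log l2 - Real.log l1 - Real.log l3)/4 with hB
    set C := (Real.log l1 - Real.log l2 - Real.log l3)/4 with hC
    set D := (Real.log l3 - Real.log l1 - Real.log l2)/4 with hD
    have hlog1 : Real.log l1 + Real.log l3 ≤ Real.log l2 := by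
      rw [← Real.log_mul (ne_of_gt h1) (ne_of_gt h3)]
      exact Real.log_le_log (mul_pos h1 h3) h5
    have hlog2 : Real.log l2 + Real.log l3 ≤ Real.log l1 := by
      rw [← Real.log_mul (ne_of_gt h2) (ne_of_gt h3)]
      exact Real.log_le_log (mul_pos h2 h3) h4
    have hlog3 : Real.log l1 + Real.log l2 ≤ Real.log l3 := by
      rw [← Real.log_mul (ne_of_gt h1) (ne_of_gt h2)]
      exact Real.log_le_log (mul_pos h1 h2) h6
    refine ⟨B, C, D, by rw [hB]; linarith, by rw [hC]; linarith, by rw [hD]; linarith, ?_⟩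
    have hE1 : Real.exp (-(B + C + D) + B + C + D) = 1 := by
      rw [show -(B + C + D) + B + C + D = (0:ℝ) by ring, Real.exp_zero]
    have hE2 : Real.exp (-(B + C + D) - B + C - D) = l1 := by
      rw [show -(B + C + D) - B + C - D = Real.log l1 by rw [hB, hC, hD]; ring,
        Real.exp_log h1]
    have hE3 : Real.exp (-(B + C + D) + B - C - D) = l2 := by
      rw [show -(B + C + D) + B - C - D = Real.log l2 by rw [hB, hC, hD]; ring,
        Real.exp_log h2]
    have hE4 : Real.exp (-(B + C + D) - B - C + D) = l3 := by
      rw [show -(B + C + D) - B - C + D = Real.log l3 by rw [hB, hC, hD]; ring,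
        Real.exp_log h3]
    rw [exp_M (-(B + C + D)) B C D a b c d ?_ ?_ ?_ ?_] <;>
      rw [hE1, hE2, hE3, hE4] <;> rw [hl1, hl2, hl3] <;> linarith
end

section
/- Let n ≥ 2 be a natural number and b ∈ ℝ with 0 ≤ b ≤ 1/(n−1). Let P be the n×n real matrix with diagonal entries 1 − (n−1)b and all off-diagonal entries equal to b (a general Jukes–Cantor Markov matrix). Then there exists q ≥ 0 such that P = exp(Q), where Q is the n×n matrix with diagonal entries −(n−1)q and all off-diagonal entries equal to q (a general Jukes–Cantor rate matrix), if and only if b < 1/n. -/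
open NormedSpace Matrix

namespace JCaux

variable (n : ℕ)

/-- The all-`1/n` matrix. -/
noncomputable def E : Matrix (Fin n) (Fin n) ℝ := Matrix.of fun _ _ => (n : ℝ)⁻¹

lemma E_mul_E (hn : n ≠ 0) : E n * E n = E n := by
  ext i j
  simp [E, Matrix.mul_apply, Finset.sum_const, Finset.card_univ]
  field_simp

/-- The algebra hom `ℝ × ℝ → Matrix`, `(x, y) ↦ x • E + y • (1 - E)`. -/
noncomputable def phi (hn : n ≠ 0) : (ℝ × ℝ) →ₐ[ℝ] Matrix (Fin n) (Fin n) ℝ where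
  toFun p := p.1 • E n + p.2 • (1 - E n)
  map_one' := by simp
  map_mul' p q := by
    have hE := E_mul_E n hn
    have h1 : E n * (1 - E n) = 0 := by rw [mul_sub, mul_one, hE, sub_self]
    have h2 : (1 - E n) * E n = 0 := by rw [sub_mul, one_mul, hE, sub_self]
    have h3 : (1 - E n) * (1 - E n) = 1 - E n := by
      rw [mul_sub, mul_one, h2, sub_zero]
    simp only [Prod.fst_mul, Prod.snd_mul, add_mul, mul_add, smul_mul_smul_comm,
      hE, h1, h2, h3, smul_zero, add_zero, zero_add]
  map_zero' := by simp
  map_add' p q := by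
    simp only [Prod.fst_add, Prod.snd_add, add_smul]
    abel
  commutes' r := by
    simp only [Algebra.algebraMap_eq_smul_one, smul_sub, Prod.smul_fst, Prod.smul_snd,
      Prod.fst_one, Prod.snd_one, smul_eq_mul, mul_one]
    module

lemma phi_cont (hn : n ≠ 0) : Continuous (phi n hn) := by
  show Continuous fun p : ℝ × ℝ => p.1 • E n + p.2 • (1 - E n)
  exact (continuous_fst.smul continuous_const).add (continuous_snd.smul continuous_const)

lemma exp_phi (hn : n ≠ 0) (x y : ℝ) :
    exp (phi n hn (x, y)) = phi n hn (Real.exp x, Real.exp y) := by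
  letI : SeminormedRing (Matrix (Fin n) (Fin n) ℝ) := Matrix.linftyOpSemiNormedRing
  letI : NormedRing (Matrix (Fin n) (Fin n) ℝ) := Matrix.linftyOpNormedRing
  letI : NormedAlgebra ℝ (Matrix (Fin n) (Fin n) ℝ) := Matrix.linftyOpNormedAlgebra
  erw [← map_exp (phi n hn) (phi_cont n hn)]
  congr 1
  ext
  · simp [Real.exp_eq_exp_ℝ]
  · simp [Real.exp_eq_exp_ℝ]

lemma phi_apply (hn : n ≠ 0) (x y : ℝ) (i j : Fin n) :
    phi n hn (x, y) i j =
      if i = j then x * (n : ℝ)⁻¹ + y * (1 - (n : ℝ)⁻¹) else x * (n : ℝ)⁻¹ - y * (n : ℝ)⁻¹ := by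
  show (x • E n + y • (1 - E n)) i j = _
  by_cases h : i = j <;>
    simp [h, E, Matrix.one_apply, Matrix.sub_apply, mul_sub, sub_eq_add_neg] <;> ring

end JCaux

/-- A general Jukes–Cantor Markov matrix on `n` states, with diagonal entries `1 - (n-1)b`
and off-diagonal entries `b`, is the matrix exponential of a general Jukes–Cantor rate
matrix (diagonal `-(n-1)q`, off-diagonal `q` with `q ≥ 0`) if and only if `b < 1/n`. -/
theorem general_jukes_cantor_embeddable_iff (n : ℕ) (hn : 2 ≤ n) (b : ℝ)
    (hb0 : 0 ≤ b) (hb1 : b ≤ 1 / ((n : ℝ) - 1)) :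
    (∃ q : ℝ, 0 ≤ q ∧
      (Matrix.of fun i j : Fin n => if i = j then 1 - ((n : ℝ) - 1) * b else b) =
        NormedSpace.exp
          (Matrix.of fun i j : Fin n => if i = j then -(((n : ℝ) - 1) * q) else q)) ↔
    b < 1 / (n : ℝ) := by
  have hn0 : n ≠ 0 := by omega
  have hn2R : (2 : ℝ) ≤ (n : ℝ) := by exact_mod_cast hn
  have hnpos : (0 : ℝ) < (n : ℝ) := by linarith
  have hP : (Matrix.of fun i j : Fin n => if i = j then 1 - ((n : ℝ) - 1) * b else b) =
      JCaux.phi n hn0 (1, 1 - (n : ℝ) * b) := by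
    ext i j
    rw [JCaux.phi_apply]
    by_cases h : i = j <;> simp only [h, Matrix.of_apply, if_true, if_false, ite_true, ite_false,
      eq_self_iff_true] <;> field_simp <;> ring
  have hQ : ∀ q : ℝ,
      (Matrix.of fun i j : Fin n => if i = j then -(((n : ℝ) - 1) * q) else q) =
      JCaux.phi n hn0 (0, -((n : ℝ) * q)) := by
    intro q
    ext i j
    rw [JCaux.phi_apply]
    by_cases h : i = j <;> simp only [h, Matrix.of_apply, if_true, if_false, ite_true, ite_false,
      eq_self_iff_true] <;> field_simp <;> ring
  have key : ∀ q : ℝ,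
      ((Matrix.of fun i j : Fin n => if i = j then 1 - ((n : ℝ) - 1) * b else b) =
        NormedSpace.exp
          (Matrix.of fun i j : Fin n => if i = j then -(((n : ℝ) - 1) * q) else q)) ↔
      1 - (n : ℝ) * b = Real.exp (-((n : ℝ) * q)) := by
    intro q
    rw [hP, hQ q, JCaux.exp_phi, Real.exp_zero]
    constructor
    · intro h
      have i0 : Fin n := ⟨0, by omega⟩
      have h0 := congrArg (fun M => M i0 i0) h
      simp only [JCaux.phi_apply] at h0
      rw [if_pos trivial, if_pos trivial] at h0
      have hne : (1 : ℝ) - (n : ℝ)⁻¹ ≠ 0 := by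
        have h1 : (n : ℝ)⁻¹ ≤ 2⁻¹ := by
          apply inv_anti₀ <;> linarith
        norm_num at h1 ⊢
        linarith
      exact mul_right_cancel₀ hne (add_left_cancel h0)
    · intro h; rw [h]
  constructor
  · rintro ⟨q, hq0, hq⟩
    have h := (key q).mp hq
    have hlt : (n : ℝ) * b < 1 := by nlinarith [Real.exp_pos (-((n : ℝ) * q))]
    rw [lt_div_iff₀ hnpos]
    linarith [mul_comm b (n : ℝ)]
  · intro hb
    have hpos : 0 < 1 - (n : ℝ) * b := by
      have := (lt_div_iff₀ hnpos).mp hb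
      nlinarith
    refine ⟨-(Real.log (1 - (n : ℝ) * b)) / n, ?_, ?_⟩
    · have hle1 : 1 - (n : ℝ) * b ≤ 1 := by nlinarith
      have hlog : Real.log (1 - (n : ℝ) * b) ≤ 0 := Real.log_nonpos (by linarith) hle1
      exact div_nonneg (by linarith) (by linarith)
    · rw [key]
      rw [show -((n : ℝ) * (-(Real.log (1 - (n : ℝ) * b)) / n)) = Real.log (1 - (n : ℝ) * b) by
        field_simp]
      rw [Real.exp_log hpos]
end

section
/- Let G = ℤ/2 × ℤ/2 × ℤ/2, and for g, h ∈ G write ⟨g,h⟩ ∈ ℤ/2 for the sum of the coordinatewise products of g and h, and set ε(g,h) = 1 if ⟨g,h⟩ = 0 and ε(g,h) = −1 otherwise. Let f : G → ℝ satisfy f(g) ≥ 0 for all g and ∑_{g∈G} f(g) = 1, and let P be the G×G matrix with P_{g,h} = f(h + g) (a hachimoji 7-parameter Markov matrix). For g ∈ G set λ_g = ∑_{h∈G} ε(g,h)·f(h). Then there exists ψ : G → ℝ with ψ(g) ≥ 0 for all g ≠ 0 and ∑_{g∈G} ψ(g) = 0 such that P = exp(Q) for the matrix Q with Q_{g,h}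 = ψ(h + g) (a hachimoji 7-parameter rate matrix) if and only if λ_g > 0 for every g ∈ G and, for every nonzero g ∈ G, ∏_{h≠0, ⟨g,h⟩=0} λ_h ≥ ∏_{h : ⟨g,h⟩=1} λ_h. -/
/-- The group `ℤ/2 × ℤ/2 × ℤ/2` underlying the hachimoji models. -/
abbrev HachimojiGroup := ZMod 2 × ZMod 2 × ZMod 2

/-- The sum of the coordinatewise products of `g` and `h`, an element of `ℤ/2`. -/
def hachimojiPairing (g h : HachimojiGroup) : ZMod 2 :=
  g.1 * h.1 + g.2.1 * h.2.1 + g.2.2 * h.2.2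

/-- `ε(g,h) = (-1)^⟨g,h⟩`, the entries of the discrete Fourier transform matrix of
`ℤ/2 × ℤ/2 × ℤ/2`. -/
noncomputable def hachimojiEps (g h : HachimojiGroup) : ℝ :=
  if hachimojiPairing g h = 0 then 1 else -1

namespace H7P

local notation "G" => HachimojiGroup

lemma pairing_comm (g h : G) : hachimojiPairing g h = hachimojiPairing h g := by
  unfold hachimojiPairing; ring

lemma eps_comm (g h : G) : hachimojiEps g h = hachimojiEps h g := by
  unfold hachimojiEps; rw [pairing_comm]

lemma pairing_add_right (g h j : G) :
    hachimojiPairing g (h + j) = hachimojiPairing g h + hachimojiPairing g j := by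
  unfold hachimojiPairing
  simp only [Prod.fst_add, Prod.snd_add]
  ring

lemma zmod2_cases (a : ZMod 2) : a = 0 ∨ a = 1 := by revert a; decide

lemma eps_mul (g h j : G) :
    hachimojiEps g (h + j) = hachimojiEps g h * hachimojiEps g j := by
  unfold hachimojiEps
  rw [pairing_add_right]
  rcases zmod2_cases (hachimojiPairing g h) with h1 | h1 <;>
    rcases zmod2_cases (hachimojiPairing g j) with h2 | h2 <;>
      simp [h1, h2, show (1 : ZMod 2) + 1 = 0 by decide, show (1 : ZMod 2) ≠ 0 by decide]

lemma add_self (a : G) : a + a = 0 := by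
  obtain ⟨x, y, z⟩ := a
  have h2 : ∀ x : ZMod 2, x + x = 0 := by decide
  simp [Prod.ext_iff, h2]

lemma add_cancel (a b : G) : a + (a + b) = b := by rw [← add_assoc, add_self, zero_add]

lemma add_eq_zero_iff (a b : G) : a + b = 0 ↔ a = b := by
  constructor
  · intro hc
    have := congrArg (a + ·) hc
    simpa [add_cancel] using this.symm
  · rintro rfl; exact add_self a

lemma pairing_zero_left (h : G) : hachimojiPairing 0 h = 0 := by
  unfold hachimojiPairing; simp

lemma pairing_zero_right (g : G) : hachimojiPairing g 0 = 0 := by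
  rw [pairing_comm]; exact pairing_zero_left g

lemma eps_zero_left (h : G) : hachimojiEps 0 h = 1 := by
  unfold hachimojiEps; rw [pairing_zero_left]; simp

lemma exists_pairing_one : ∀ g : G, g ≠ 0 → ∃ h : G, hachimojiPairing g h = 1 := by
  decide

lemma sum_eps (g : G) : ∑ h : G, hachimojiEps g h = if g = 0 then 8 else 0 := by
  by_cases hg : g = 0
  · subst hg
    simp only [eps_zero_left, if_pos rfl, Finset.sum_const, Finset.card_univ]
    norm_num [Fintype.card_prod]
  · obtain ⟨h0, hh0⟩ := exists_pairing_one g hg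
    have key : ∑ h : G, hachimojiEps g h = ∑ h : G, hachimojiEps g (h + h0) :=
      (Fintype.sum_equiv (Equiv.addRight h0) (fun x => hachimojiEps g (x + h0))
        (fun x => hachimojiEps g x) (fun x => rfl)).symm
    have heps0 : hachimojiEps g h0 = -1 := by
      unfold hachimojiEps
      rw [hh0]
      simp [show (1 : ZMod 2) ≠ 0 by decide]
    have key2 : ∑ h : G, hachimojiEps g (h + h0) = -∑ h : G, hachimojiEps g h := by
      rw [← Finset.sum_neg_distrib]
      exact Finset.sum_congr rfl fun h _ => by rw [eps_mul, heps0]; ring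
    rw [if_neg hg]
    linarith [key.trans key2]

lemma inversion (φ : G → ℝ) (x : G) :
    ∑ k : G, hachimojiEps k x * ∑ j : G, hachimojiEps k j * φ j = 8 * φ x := by
  have h1 : ∀ k : G, hachimojiEps k x * ∑ j : G, hachimojiEps k j * φ j
      = ∑ j : G, hachimojiEps k (x + j) * φ j := by
    intro k
    rw [Finset.mul_sum]
    exact Finset.sum_congr rfl fun j _ => by rw [eps_mul, mul_assoc]
  simp_rw [h1]
  rw [Finset.sum_comm]
  have h2 : ∀ j : G, ∑ k : G, hachimojiEps k (x + j) * φ j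
      = (if x + j = 0 then (8:ℝ) else 0) * φ j := by
    intro j
    rw [← Finset.sum_mul]
    congr 1
    calc ∑ k : G, hachimojiEps k (x + j) = ∑ k : G, hachimojiEps (x + j) k :=
          Finset.sum_congr rfl fun k _ => eps_comm k (x + j)
      _ = _ := sum_eps _
  simp_rw [h2]
  have h3 : ∀ j : G, ((if x + j = 0 then (8:ℝ) else 0) * φ j)
      = if j = x then 8 * φ j else 0 := by
    intro j
    by_cases hj : j = x
    · subst hj; simp [add_self]
    · have hne : x + j ≠ 0 := fun hc => hj ((add_eq_zero_iff x j).mp hc).symm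
      simp [hne, hj]
  simp_rw [h3]
  simp

lemma inversion' (φ : G → ℝ) (x : G) :
    ∑ k : G, hachimojiEps x k * ∑ j : G, hachimojiEps k j * φ j = 8 * φ x := by
  rw [← inversion φ x]
  exact Finset.sum_congr rfl fun k _ => by rw [eps_comm]
lemma zmod2_ne_zero : ∀ a : ZMod 2, ¬a = 0 ↔ a = 1 := by decide

lemma split (g : G) (t : G → ℝ) :
    ∑ h : G, hachimojiEps g h * t h =
      (∑ h ∈ Finset.univ.filter (fun h : G => hachimojiPairing g h = 0), t h)
      - ∑ h ∈ Finset.univ.filter (fun h : G => hachimojiPairing g h = 1), t h := by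
  rw [← Finset.sum_filter_add_sum_filter_not Finset.univ
    (fun h : G => hachimojiPairing g h = 0) (fun h => hachimojiEps g h * t h)]
  have e1 : ∑ h ∈ Finset.univ.filter (fun h : G => hachimojiPairing g h = 0),
      hachimojiEps g h * t h
      = ∑ h ∈ Finset.univ.filter (fun h : G => hachimojiPairing g h = 0), t h := by
    refine Finset.sum_congr rfl fun h hh => ?_
    rw [Finset.mem_filter] at hh
    unfold hachimojiEps
    rw [if_pos hh.2, one_mul]
  have e2 : ∑ h ∈ Finset.univ.filter (fun h : G => ¬hachimojiPairing g h = 0),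
      hachimojiEps g h * t h
      = -∑ h ∈ Finset.univ.filter (fun h : G => hachimojiPairing g h = 1), t h := by
    have hfil : Finset.univ.filter (fun h : G => ¬hachimojiPairing g h = 0)
        = Finset.univ.filter (fun h : G => hachimojiPairing g h = 1) := by
      apply Finset.filter_congr
      intro h _
      simpa using zmod2_ne_zero (hachimojiPairing g h)
    rw [hfil, ← Finset.sum_neg_distrib]
    refine Finset.sum_congr rfl fun h hh => ?_
    rw [Finset.mem_filter] at hh
    unfold hachimojiEps
    rw [if_neg (by rw [hh.2]; decide)]
    ring
  rw [e1, e2]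
  ring

noncomputable def Emat : Matrix G G ℝ := Matrix.of hachimojiEps

lemma Emat_mul_Emat : Emat * Emat = (8:ℝ) • 1 := by
  ext g h
  simp only [Matrix.mul_apply, Emat, Matrix.of_apply, Matrix.smul_apply, Matrix.one_apply,
    smul_eq_mul]
  have hk : ∀ k : G, hachimojiEps g k * hachimojiEps k h = hachimojiEps (g + h) k := by
    intro k
    rw [eps_comm (g + h) k, eps_mul, eps_comm k g]
  rw [Finset.sum_congr rfl fun k _ => hk k, sum_eps]
  by_cases hgh : g = h
  · subst hgh; simp [add_self]
  · have hne : g + h ≠ 0 := fun hc => hgh ((add_eq_zero_iff g h).mp hc)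
    simp [hne, hgh]

lemma smul_Emat_mul : ((8:ℝ)⁻¹ • Emat) * Emat = 1 := by
  rw [Matrix.smul_mul, Emat_mul_Emat, smul_smul]
  norm_num

lemma Emat_mul_smul : Emat * ((8:ℝ)⁻¹ • Emat) = 1 := by
  rw [Matrix.mul_smul, Emat_mul_Emat, smul_smul]
  norm_num

lemma Emat_inv : Emat⁻¹ = (8:ℝ)⁻¹ • Emat :=
  Matrix.inv_eq_right_inv Emat_mul_smul

lemma isUnit_Emat : IsUnit Emat :=
  ⟨⟨Emat, (8:ℝ)⁻¹ • Emat, Emat_mul_smul, smul_Emat_mul⟩, rfl⟩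

noncomputable def mu (ψ : G → ℝ) (g : G) : ℝ := ∑ j : G, hachimojiEps g j * ψ j

lemma Emat_mul_circ (ψ : G → ℝ) :
    Emat * (Matrix.of fun g h : G => ψ (h + g)) = Matrix.diagonal (mu ψ) * Emat := by
  ext g h
  rw [Matrix.mul_apply, Matrix.diagonal_mul]
  have key : ∑ k : G, Emat g k * (Matrix.of fun g h : G => ψ (h + g)) k h
      = ∑ x : G, hachimojiEps g (h + x) * ψ (h + (h + x)) := by
    exact (Fintype.sum_equiv (Equiv.addLeft h)
      (fun x : G => hachimojiEps g (h + x) * ψ (h + (h + x)))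
      (fun k : G => Emat g k * (Matrix.of fun g h : G => ψ (h + g)) k h)
      (fun x => rfl)).symm
  rw [key]
  have key2 : ∀ x : G, hachimojiEps g (h + x) * ψ (h + (h + x))
      = hachimojiEps g h * (hachimojiEps g x * ψ x) := by
    intro x
    rw [add_cancel, eps_mul]
    ring
  rw [Finset.sum_congr rfl fun x _ => key2 x, ← Finset.mul_sum]
  unfold mu Emat
  rw [Matrix.of_apply]
  ring

lemma circ_eq (ψ : G → ℝ) :
    (Matrix.of fun g h : G => ψ (h + g)) = Emat⁻¹ * Matrix.diagonal (mu ψ) * Emat := by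
  have h1 : Emat⁻¹ * Emat = 1 := by rw [Emat_inv]; exact smul_Emat_mul
  calc (Matrix.of fun g h : G => ψ (h + g))
      = (Emat⁻¹ * Emat) * (Matrix.of fun g h : G => ψ (h + g)) := by rw [h1, one_mul]
    _ = Emat⁻¹ * (Emat * (Matrix.of fun g h : G => ψ (h + g))) := by rw [mul_assoc]
    _ = Emat⁻¹ * (Matrix.diagonal (mu ψ) * Emat) := by rw [Emat_mul_circ]
    _ = Emat⁻¹ * Matrix.diagonal (mu ψ) * Emat := by rw [mul_assoc]

lemma exp_circ (ψ : G → ℝ) :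
    NormedSpace.exp (Matrix.of fun g h : G => ψ (h + g)) =
      Matrix.of fun g h : G => (8:ℝ)⁻¹ * ∑ k : G, hachimojiEps k (h + g) * Real.exp (mu ψ k) := by
  rw [circ_eq, Matrix.exp_conj' Emat _ isUnit_Emat, Matrix.exp_diagonal]
  have hexp : NormedSpace.exp (mu ψ) = fun k => Real.exp (mu ψ k) := by
    funext k
    rw [Pi.coe_exp, Real.exp_eq_exp_ℝ]
  rw [hexp, Emat_inv]
  ext g h
  rw [Matrix.mul_apply]
  have he : ∀ k : G, (((8:ℝ)⁻¹ • Emat) * Matrix.diagonal fun k => Real.exp (mu ψ k)) g k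
      * Emat k h = (8:ℝ)⁻¹ * (hachimojiEps k (h + g) * Real.exp (mu ψ k)) := by
    intro k
    rw [Matrix.mul_diagonal, Matrix.smul_apply]
    have : hachimojiEps g k * hachimojiEps k h = hachimojiEps k (h + g) := by
      rw [eps_mul, eps_comm g k]; ring
    unfold Emat
    simp only [Matrix.of_apply, smul_eq_mul]
    rw [← this]
    ring
  rw [Finset.sum_congr rfl fun k _ => he k, ← Finset.mul_sum, Matrix.of_apply]
lemma fourier_fourier (v : G → ℝ) (g : G) :
    ∑ h : G, hachimojiEps g h * ((8:ℝ)⁻¹ * ∑ k : G, hachimojiEps k h * v k) = v g := by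
  have key : ∀ h : G, hachimojiEps g h * ((8:ℝ)⁻¹ * ∑ k : G, hachimojiEps k h * v k)
      = (8:ℝ)⁻¹ * (hachimojiEps h g * ∑ k : G, hachimojiEps h k * v k) := by
    intro h
    have hS : ∑ k : G, hachimojiEps k h * v k = ∑ k : G, hachimojiEps h k * v k :=
      Finset.sum_congr rfl fun k _ => by rw [eps_comm]
    rw [hS, eps_comm g h]
    ring
  rw [Finset.sum_congr rfl fun h _ => key h, ← Finset.mul_sum, inversion v g]
  ring

end H7P

open H7P

/-- A hachimoji 7-parameter Markov matrix `P` with `P g h = f (h + g)` is H7P embeddable,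
i.e. the matrix exponential of a hachimoji 7-parameter rate matrix, if and only if all its
eigenvalues `λ_g = ∑ h, ε(g,h) f(h)` are positive and, for every nonzero `g`,
`∏_{h ≠ 0, ⟨g,h⟩ = 0} λ_h ≥ ∏_{⟨g,h⟩ = 1} λ_h`. -/
theorem h7p_embeddable_iff (f : HachimojiGroup → ℝ)
    (hfnonneg : ∀ g : HachimojiGroup, 0 ≤ f g) (hfsum : ∑ g : HachimojiGroup, f g = 1)
    (P : Matrix HachimojiGroup HachimojiGroup ℝ)
    (hP : ∀ g h : HachimojiGroup, P g h = f (h + g))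
    (lam : HachimojiGroup → ℝ)
    (hlam : ∀ g : HachimojiGroup, lam g = ∑ h : HachimojiGroup, hachimojiEps g h * f h) :
    (∃ ψ : HachimojiGroup → ℝ, (∀ g : HachimojiGroup, g ≠ 0 → 0 ≤ ψ g) ∧
      (∑ g : HachimojiGroup, ψ g = 0) ∧
      P = NormedSpace.exp (Matrix.of fun g h : HachimojiGroup => ψ (h + g))) ↔
    ((∀ g : HachimojiGroup, 0 < lam g) ∧
      ∀ g : HachimojiGroup, g ≠ 0 →
        ∏ h ∈ Finset.univ.filter
            (fun h : HachimojiGroup => h ≠ 0 ∧ hachimojiPairing g h = 0), lam h ≥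
        ∏ h ∈ Finset.univ.filter
            (fun h : HachimojiGroup => hachimojiPairing g h = 1), lam h) := by
  have lam0 : lam 0 = 1 := by
    rw [hlam 0]
    rw [Finset.sum_congr rfl fun h _ => by rw [eps_zero_left h, one_mul]]
    exact hfsum
  -- notation for the two filters
  have hS0mem : ∀ g : HachimojiGroup,
      (0 : HachimojiGroup) ∈ Finset.univ.filter
        (fun h : HachimojiGroup => hachimojiPairing g h = 0) := by
    intro g
    simp [pairing_zero_right]
  have hSerase : ∀ g : HachimojiGroup,
      Finset.univ.filter (fun h : HachimojiGroup => h ≠ 0 ∧ hachimojiPairing g h = 0)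
        = (Finset.univ.filter (fun h : HachimojiGroup => hachimojiPairing g h = 0)).erase 0 := by
    intro g
    ext h
    simp [Finset.mem_erase, and_comm]
  constructor
  · rintro ⟨ψ, hψnn, hψsum, hPeq⟩
    rw [exp_circ] at hPeq
    have hfe : ∀ x : HachimojiGroup,
        f x = (8:ℝ)⁻¹ * ∑ k : HachimojiGroup, hachimojiEps k x * Real.exp (mu ψ k) := by
      intro x
      have h1 := congrFun (congrFun hPeq 0) x
      rw [hP 0 x, Matrix.of_apply, add_zero] at h1
      exact h1
    have hlamexp : ∀ g : HachimojiGroup, lam g = Real.exp (mu ψ g) := by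
      intro g
      rw [hlam g, Finset.sum_congr rfl fun h _ => by rw [hfe h]]
      exact fourier_fourier (fun k => Real.exp (mu ψ k)) g
    refine ⟨fun g => by rw [hlamexp g]; exact Real.exp_pos _, ?_⟩
    intro g hg
    have mu0 : mu ψ 0 = 0 := by
      unfold mu
      rw [Finset.sum_congr rfl fun j _ => by rw [eps_zero_left j, one_mul]]
      exact hψsum
    have lam0' : lam 0 = 1 := by rw [hlamexp 0, mu0, Real.exp_zero]
    have h8 : ∑ h : HachimojiGroup, hachimojiEps g h * mu ψ h = 8 * ψ g := inversion' ψ g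
    have hsp := split g (mu ψ)
    have hψg : 0 ≤ ψ g := hψnn g hg
    have hsumle :
        ∑ h ∈ Finset.univ.filter (fun h : HachimojiGroup => hachimojiPairing g h = 1), mu ψ h
        ≤ ∑ h ∈ Finset.univ.filter (fun h : HachimojiGroup => hachimojiPairing g h = 0),
            mu ψ h := by
      rw [hsp] at h8
      linarith
    have hprod0 :
        ∏ h ∈ Finset.univ.filter (fun h : HachimojiGroup => hachimojiPairing g h = 0), lam h
        = lam 0 * ∏ h ∈ (Finset.univ.filter
            (fun h : HachimojiGroup => hachimojiPairing g h = 0)).erase 0, lam h :=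
      (Finset.mul_prod_erase _ lam (hS0mem g)).symm
    rw [hSerase g]
    have key : ∀ s : Finset HachimojiGroup, ∏ h ∈ s, lam h = Real.exp (∑ h ∈ s, mu ψ h) := by
      intro s
      rw [Real.exp_sum]
      exact Finset.prod_congr rfl fun h _ => hlamexp h
    have : ∏ h ∈ (Finset.univ.filter
          (fun h : HachimojiGroup => hachimojiPairing g h = 0)).erase 0, lam h
        = ∏ h ∈ Finset.univ.filter
          (fun h : HachimojiGroup => hachimojiPairing g h = 0), lam h := by
      rw [hprod0, lam0', one_mul]
    rw [this, key, key]
    exact Real.exp_le_exp.mpr hsumle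
  · rintro ⟨hpos, hineq⟩
    set L : HachimojiGroup → ℝ := fun k => Real.log (lam k) with hL
    have hL0 : L 0 = 0 := by rw [hL]; simp [lam0]
    refine ⟨fun x => (8:ℝ)⁻¹ * ∑ k : HachimojiGroup, hachimojiEps k x * L k, ?_, ?_, ?_⟩
    · -- nonnegativity
      intro g hg
      have hcm : ∑ k : HachimojiGroup, hachimojiEps k g * L k
          = ∑ k : HachimojiGroup, hachimojiEps g k * L k :=
        Finset.sum_congr rfl fun k _ => by rw [eps_comm]
      have hsp := split g L
      have hprodpos : ∀ s : Finset HachimojiGroup, 0 < ∏ h ∈ s, lam h :=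
        fun s => Finset.prod_pos fun h _ => hpos h
      have hlog : ∀ s : Finset HachimojiGroup, ∑ h ∈ s, L h = Real.log (∏ h ∈ s, lam h) := by
        intro s
        rw [Real.log_prod (s := s) (f := lam) fun h _ => (hpos h).ne']
      have hP0 :
          ∏ h ∈ Finset.univ.filter (fun h : HachimojiGroup => hachimojiPairing g h = 0), lam h
          = ∏ h ∈ Finset.univ.filter
              (fun h : HachimojiGroup => h ≠ 0 ∧ hachimojiPairing g h = 0), lam h := by
        rw [hSerase g, ← Finset.mul_prod_erase _ lam (hS0mem g), lam0, one_mul]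
      have hge := hineq g hg
      have hloge : Real.log (∏ h ∈ Finset.univ.filter
            (fun h : HachimojiGroup => hachimojiPairing g h = 1), lam h)
          ≤ Real.log (∏ h ∈ Finset.univ.filter
            (fun h : HachimojiGroup => hachimojiPairing g h = 0), lam h) := by
        rw [Real.log_le_log_iff (hprodpos _) (hprodpos _), hP0]
        exact hge
      have : 0 ≤ ∑ k : HachimojiGroup, hachimojiEps g k * L k := by
        rw [hsp, hlog, hlog]
        linarith
      show 0 ≤ (8:ℝ)⁻¹ * ∑ k : HachimojiGroup, hachimojiEps k g * L k
      rw [hcm]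
      positivity
    · -- sum zero
      rw [← Finset.mul_sum]
      have : ∑ g : HachimojiGroup, ∑ k : HachimojiGroup, hachimojiEps k g * L k
          = ∑ k : HachimojiGroup, (if k = 0 then (8:ℝ) else 0) * L k := by
        rw [Finset.sum_comm]
        exact Finset.sum_congr rfl fun k _ => by rw [← Finset.sum_mul, sum_eps k]
      rw [this]
      have : ∀ k : HachimojiGroup, (if k = 0 then (8:ℝ) else 0) * L k
          = if k = 0 then 8 * L k else 0 := by
        intro k; by_cases hk : k = 0 <;> simp [hk]
      rw [Finset.sum_congr rfl fun k _ => this k]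
      simp [hL0]
    · -- P = exp Q
      refine Eq.trans ?_ (exp_circ (fun x => (8:ℝ)⁻¹ *
        ∑ k : HachimojiGroup, hachimojiEps k x * L k)).symm
      ext g h
      rw [hP g h, Matrix.of_apply]
      have hmu : ∀ k : HachimojiGroup,
          mu (fun x => (8:ℝ)⁻¹ * ∑ m : HachimojiGroup, hachimojiEps m x * L m) k = L k := by
        intro k
        unfold mu
        exact fourier_fourier L k
      rw [Finset.sum_congr rfl fun k _ => by
        rw [hmu k, hL, Real.exp_log (hpos k)]]
      have : ∀ k : HachimojiGroup, hachimojiEps k (h + g) * lam k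
          = hachimojiEps k (h + g) * ∑ j : HachimojiGroup, hachimojiEps k j * f j := by
        intro k; rw [hlam k]
      rw [Finset.sum_congr rfl fun k _ => this k, inversion f (h + g)]
      ring
end

section
/- Identify the eight states A=(0,0,0), C=(0,0,1), T=(0,1,0), G=(0,1,1), P=(1,0,0), Z=(1,0,1), S=(1,1,0), B=(1,1,1) with the elements of G = ℤ/2 × ℤ/2 × ℤ/2. Let a, b, c, d ∈ ℝ with a, b, c, d ≥ 0 and a + 4b + c + 2d = 1, and let M be the G×G matrix M_{g,h} = f(h+g), where f(A) = a, f(G) = c, f(P) = f(B) = d, and f(C) = f(T) = f(Z) = f(S) = b (a hachimoji 3-parameter Markov matrix). Set x = a − 4b + c + 2d, y = a + c − 2d, z = a − c (the nonunit eigenvalues of M). Then there exist β, γ, δ ≥ 0 such that M = exp(Q), where Q_{g,h} = ψ(h+g) with ψ(A) = −(4β + γ + 2δ), ψ(G) = γ, ψ(P) = ψ(B) = δ, and ψ equal to β on the remaining four elements (a hachimoji 3-parameter rate matrix), if and only if 0 < x ≤ 1, y > 0, z > 0, y² ≤ x, and z⁴ ≤ x·y². -/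
namespace H3PAux

open Matrix NormedSpace

abbrev G := HachimojiGroup

def p (u g : G) : ZMod 2 := u.1 * g.1 + u.2.1 * g.2.1 + u.2.2 * g.2.2

noncomputable def ε (u g : G) : ℝ := if p u g = 0 then 1 else -1

lemma zmod2_cases (x : ZMod 2) : x = 0 ∨ x = 1 := by revert x; decide

lemma eps_comm (u g : G) : ε u g = ε g u := by
  unfold ε; rw [show p u g = p g u from by simp [p, mul_comm]]

lemma p_add (u g h : G) : p u (g + h) = p u g + p u h := by
  simp only [p, Prod.fst_add, Prod.snd_add]; ring

lemma eps_mul (u g h : G) : ε u g * ε u h = ε u (g + h) := by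
  unfold ε
  rw [p_add]
  rcases zmod2_cases (p u g) with e | e <;> rcases zmod2_cases (p u h) with e' | e' <;>
    rw [e, e'] <;> simp (config := { decide := true })

lemma sum_zmod2 (F : ZMod 2 → ℝ) : ∑ x, F x = F 0 + F 1 := by
  rw [show (Finset.univ : Finset (ZMod 2)) = {0, 1} from by decide,
    Finset.sum_pair (by decide)]

lemma sum_G (F : G → ℝ) :
    ∑ u, F u = F (0,0,0) + F (0,0,1) + F (0,1,0) + F (0,1,1)
      + F (1,0,0) + F (1,0,1) + F (1,1,0) + F (1,1,1) := by
  rw [Fintype.sum_prod_type]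
  simp only [Fintype.sum_prod_type, sum_zmod2]
  ring

lemma sum_eps (g : G) : ∑ u, ε u g = if g = 0 then 8 else 0 := by
  obtain ⟨g1, g2, g3⟩ := g
  rcases zmod2_cases g1 with h1 | h1 <;> rcases zmod2_cases g2 with h2 | h2 <;>
    rcases zmod2_cases g3 with h3 | h3 <;> subst h1 <;> subst h2 <;> subst h3 <;>
    · rw [sum_G]
      simp (config := { decide := true }) [ε, p]
      try norm_num


lemma add_self_zero : ∀ g h : G, g + h = 0 ↔ g = h := by decide

noncomputable def H : Matrix G G ℝ := Matrix.of ε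

noncomputable def Phi (v : G → ℝ) : Matrix G G ℝ :=
  H * Matrix.diagonal v * ((8 : ℝ)⁻¹ • H)

lemma H_mul_H : H * H = (8 : ℝ) • 1 := by
  ext g h
  simp only [H, mul_apply, of_apply, Matrix.smul_apply, one_apply, smul_eq_mul]
  have key : ∀ u : G, ε g u * ε u h = ε u (g + h) := fun u => by
    rw [eps_comm g u, eps_mul]
  rw [Finset.sum_congr rfl fun u _ => key u, sum_eps]
  by_cases e : g = h
  · subst e; simp [(add_self_zero g g).mpr rfl]
  · rw [if_neg (fun hq => e ((add_self_zero g h).mp hq)), if_neg e, mul_zero]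

noncomputable def U : (Matrix G G ℝ)ˣ where
  val := H
  inv := (8 : ℝ)⁻¹ • H
  val_inv := by rw [mul_smul_comm, H_mul_H, smul_smul]; norm_num
  inv_val := by rw [smul_mul_assoc, H_mul_H, smul_smul]; norm_num

lemma Phi_eq (v : G → ℝ) : Phi v = (U : Matrix G G ℝ) * Matrix.diagonal v * ((U⁻¹ : (Matrix G G ℝ)ˣ) : Matrix G G ℝ) := rfl

lemma Phi_injective : Function.Injective Phi := by
  intro v w hvw
  have hc : ∀ D : Matrix G G ℝ,
      ((U⁻¹ : (Matrix G G ℝ)ˣ) : Matrix G G ℝ) * ((U : Matrix G G ℝ) * D *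
        ((U⁻¹ : (Matrix G G ℝ)ˣ) : Matrix G G ℝ)) * (U : Matrix G G ℝ) = D := by
    intro D
    simp only [← Matrix.mul_assoc]
    rw [Units.inv_mul, Matrix.one_mul, Matrix.mul_assoc, Units.inv_mul, Matrix.mul_one]
  have h0 := hvw
  rw [Phi_eq, Phi_eq] at h0
  have h2 : Matrix.diagonal v = Matrix.diagonal w := by
    rw [← hc (Matrix.diagonal v), ← hc (Matrix.diagonal w), h0]
  funext u
  have h3 := congrArg (fun X : Matrix G G ℝ => X u u) h2
  simpa using h3

/-- Fourier transform. -/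
noncomputable def hat (f : G → ℝ) : G → ℝ := fun u => ∑ k, ε u k * f k

lemma conv_eq_Phi (f : G → ℝ) :
    Matrix.of (fun g h : G => f (h + g)) = Phi (hat f) := by
  ext g h
  have e1 : ∀ j : G, ε g j * hat f j * ((8:ℝ)⁻¹ * ε j h)
      = (8:ℝ)⁻¹ * ∑ k, ε j (g + h + k) * f k := by
    intro j
    rw [hat, show ε g j * (∑ k, ε j k * f k) * ((8:ℝ)⁻¹ * ε j h)
        = ∑ k, ε g j * (ε j k * f k) * ((8:ℝ)⁻¹ * ε j h) from by
      rw [Finset.mul_sum, Finset.sum_mul], Finset.mul_sum]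
    refine Finset.sum_congr rfl fun k _ => ?_
    rw [eps_comm g j, show ε j g * (ε j k * f k) * ((8:ℝ)⁻¹ * ε j h)
        = (8:ℝ)⁻¹ * (ε j g * ε j h * ε j k * f k) from by ring, eps_mul, eps_mul]
  have e2 : ∀ k : G, (∑ j : G, ε j (g + h + k)) * f k
      = if k = g + h then (8:ℝ) * f k else 0 := by
    intro k
    rw [sum_eps]
    have hiff : g + h + k = 0 ↔ k = g + h := by
      rw [add_self_zero (g+h) k]; exact eq_comm
    by_cases e : k = g + h
    · rw [if_pos (hiff.mpr e), if_pos e]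
    · rw [if_neg (fun q => e (hiff.mp q)), if_neg e, zero_mul]
  have hS : ∑ j, ε g j * hat f j * ((8:ℝ)⁻¹ * ε j h)
      = (8:ℝ)⁻¹ * ∑ k, (∑ j : G, ε j (g + h + k)) * f k := by
    rw [Finset.sum_congr rfl fun j _ => e1 j, ← Finset.mul_sum, Finset.sum_comm]
    congr 1
    refine Finset.sum_congr rfl fun k _ => ?_
    rw [Finset.sum_mul]
  calc (Matrix.of (fun g h : G => f (h + g))) g h = f (h + g) := rfl
    _ = (8:ℝ)⁻¹ * ∑ k, (∑ j : G, ε j (g + h + k)) * f k := by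
        rw [Finset.sum_congr rfl fun k _ => e2 k,
          Finset.sum_ite_eq' Finset.univ (g + h) (fun k => (8:ℝ) * f k)]
        rw [if_pos (Finset.mem_univ _), add_comm h g]
        ring
    _ = ∑ j, ε g j * hat f j * ((8:ℝ)⁻¹ * ε j h) := hS.symm
    _ = Phi (hat f) g h := by
        rw [Phi, Matrix.mul_apply]
        simp only [Matrix.mul_diagonal, Matrix.smul_apply, smul_eq_mul, H, Matrix.of_apply]

lemma exp_Phi (w : G → ℝ) :
    NormedSpace.exp (Phi w) = Phi (fun u => Real.exp (w u)) := by
  rw [Phi_eq, Matrix.exp_units_conj U, Matrix.exp_diagonal, Phi_eq]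
  have : NormedSpace.exp w = fun u => Real.exp (w u) := by
    funext u
    rw [Pi.coe_exp, Real.exp_eq_exp_ℝ]
  rw [this]

lemma hat_vals (f : G → ℝ) (va vb vc vd : ℝ)
    (hA : f (0,0,0) = va) (hC : f (0,0,1) = vb) (hT : f (0,1,0) = vb)
    (hG : f (0,1,1) = vc) (hP : f (1,0,0) = vd) (hZ : f (1,0,1) = vb)
    (hS : f (1,1,0) = vb) (hB : f (1,1,1) = vd) :
    hat f (0,0,0) = va + 4*vb + vc + 2*vd ∧
    hat f (0,1,1) = va - 4*vb + vc + 2*vd ∧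
    hat f (1,0,0) = va + vc - 2*vd ∧
    hat f (1,1,1) = va + vc - 2*vd ∧
    hat f (0,0,1) = va - vc ∧
    hat f (0,1,0) = va - vc ∧
    hat f (1,0,1) = va - vc ∧
    hat f (1,1,0) = va - vc := by
  refine ⟨?_, ?_, ?_, ?_, ?_, ?_, ?_, ?_⟩ <;>
  · rw [hat, sum_G]
    simp (config := { decide := true }) [ε, p, hA, hC, hT, hG, hP, hZ, hS, hB,
      show f 0 = va from hA, show f (0,1) = vc from hG,
      show f (1,0) = vd from hP, show f 1 = vd from hB]
    try ring

end H3PAux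

open H3PAux in
/-- A hachimoji 3-parameter Markov matrix `M`, with `M g h = f (h + g)` where
`f(A) = a`, `f(G) = c`, `f(P) = f(B) = d` and `f = b` on the remaining four elements,
is H3P embeddable, i.e. the matrix exponential of a hachimoji 3-parameter rate matrix,
if and only if its nonunit eigenvalues `x = a - 4b + c + 2d`, `y = a + c - 2d`, `z = a - c`
satisfy `0 < x ≤ 1`, `y > 0`, `z > 0`, `y² ≤ x` and `z⁴ ≤ x·y²`. -/
theorem h3p_embeddable_iff (a b c d : ℝ)
    (ha : 0 ≤ a) (hb : 0 ≤ b) (hc : 0 ≤ c) (hd : 0 ≤ d)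
    (hsum : a + 4 * b + c + 2 * d = 1)
    (f : HachimojiGroup → ℝ)
    (hfA : f (0, 0, 0) = a) (hfC : f (0, 0, 1) = b) (hfT : f (0, 1, 0) = b)
    (hfG : f (0, 1, 1) = c) (hfP : f (1, 0, 0) = d) (hfZ : f (1, 0, 1) = b)
    (hfS : f (1, 1, 0) = b) (hfB : f (1, 1, 1) = d)
    (M : Matrix HachimojiGroup HachimojiGroup ℝ)
    (hM : ∀ g h : HachimojiGroup, M g h = f (h + g)) :
    (∃ β γ δ : ℝ, 0 ≤ β ∧ 0 ≤ γ ∧ 0 ≤ δ ∧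
      ∃ ψ : HachimojiGroup → ℝ,
        ψ (0, 0, 0) = -(4 * β + γ + 2 * δ) ∧ ψ (0, 0, 1) = β ∧ ψ (0, 1, 0) = β ∧
        ψ (0, 1, 1) = γ ∧ ψ (1, 0, 0) = δ ∧ ψ (1, 0, 1) = β ∧
        ψ (1, 1, 0) = β ∧ ψ (1, 1, 1) = δ ∧
        M = NormedSpace.exp (Matrix.of fun g h : HachimojiGroup => ψ (h + g))) ↔
    (0 < a - 4 * b + c + 2 * d ∧ a - 4 * b + c + 2 * d ≤ 1 ∧
      0 < a + c - 2 * d ∧ 0 < a - c ∧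
      (a + c - 2 * d) ^ 2 ≤ a - 4 * b + c + 2 * d ∧
      (a - c) ^ 4 ≤ (a - 4 * b + c + 2 * d) * (a + c - 2 * d) ^ 2) := by
  have hMf : M = Phi (hat f) := by
    have h0 : M = Matrix.of (fun g h : HachimojiGroup => f (h + g)) := by
      ext g h; exact hM g h
    rw [h0, conv_eq_Phi]
  obtain ⟨hf0, hfx, hfy1, hfy2, hfz1, hfz2, hfz3, hfz4⟩ :=
    hat_vals f a b c d hfA hfC hfT hfG hfP hfZ hfS hfB
  constructor
  · rintro ⟨β, γ, δ, hβ, hγ, hδ, ψ, hpA, hpC, hpT, hpG, hpP, hpZ, hpS, hpB, hexp⟩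
    obtain ⟨hq0, hqx, hqy1, hqy2, hqz1, hqz2, hqz3, hqz4⟩ :=
      hat_vals ψ (-(4*β+γ+2*δ)) β γ δ hpA hpC hpT hpG hpP hpZ hpS hpB
    rw [conv_eq_Phi, exp_Phi] at hexp
    have heq : hat f = fun u => Real.exp (hat ψ u) :=
      Phi_injective (hMf.symm.trans hexp)
    have hx : a - 4*b + c + 2*d = Real.exp (-(8*β)) := by
      have h1 := congrFun heq (0,1,1)
      rw [hfx, hqx] at h1
      rw [h1]; congr 1; ring
    have hy : a + c - 2*d = Real.exp (-(4*β+4*δ)) := by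
      have h1 := congrFun heq (1,0,0)
      rw [hfy1, hqy1] at h1
      rw [h1]; congr 1; ring
    have hz : a - c = Real.exp (-(4*β+2*γ+2*δ)) := by
      have h1 := congrFun heq (0,0,1)
      rw [hfz1, hqz1] at h1
      rw [h1]; congr 1; ring
    refine ⟨by rw [show a - 4*b + c + 2*d = a - 4 * b + c + 2 * d from by ring, hx]; exact Real.exp_pos _,
      by rw [hx]; exact Real.exp_le_one_iff.mpr (by linarith),
      by rw [hy]; exact Real.exp_pos _,
      by rw [hz]; exact Real.exp_pos _, ?_, ?_⟩
    · rw [hx, hy, ← Real.exp_nat_mul]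
      exact Real.exp_le_exp.mpr (by push_cast; linarith)
    · rw [hx, hy, hz, ← Real.exp_nat_mul, ← Real.exp_nat_mul, ← Real.exp_add]
      exact Real.exp_le_exp.mpr (by push_cast; linarith)
  · rintro ⟨hX, hX1, hY, hZ, hYX, hZXY⟩
    have hlx0 : Real.log (a - 4*b + c + 2*d) ≤ 0 := Real.log_nonpos (le_of_lt hX) hX1
    have hly : Real.log ((a + c - 2*d)^2) ≤ Real.log (a - 4*b + c + 2*d) :=
      (Real.log_le_log_iff (pow_pos hY 2) hX).mpr hYX
    have hlz : Real.log ((a - c)^4) ≤ Real.log ((a - 4*b + c + 2*d) * (a + c - 2*d)^2) :=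
      (Real.log_le_log_iff (pow_pos hZ 4) (mul_pos hX (pow_pos hY 2))).mpr hZXY
    rw [Real.log_pow] at hly
    rw [Real.log_pow, Real.log_mul (ne_of_gt hX) (ne_of_gt (pow_pos hY 2)),
      Real.log_pow] at hlz
    push_cast at hly hlz
    set lx := Real.log (a - 4*b + c + 2*d) with hlxdef
    set ly := Real.log (a + c - 2*d) with hlydef
    set lz := Real.log (a - c) with hlzdef
    refine ⟨-lx/8, (lx + 2*ly - 4*lz)/8, (lx - 2*ly)/8,
      by linarith, by linarith, by linarith, ?_⟩
    set β : ℝ := -lx/8 with hβdef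
    set γ : ℝ := (lx + 2*ly - 4*lz)/8 with hγdef
    set δ : ℝ := (lx - 2*ly)/8 with hδdef
    refine ⟨fun u => if u = ((0,0,0) : HachimojiGroup) then -(4*β+γ+2*δ)
        else if u = (0,1,1) then γ else if u = (1,0,0) then δ
        else if u = (1,1,1) then δ else β,
      by simp (config := { decide := true }),
      by simp (config := { decide := true }),
      by simp (config := { decide := true }),
      by simp (config := { decide := true }),
      by simp (config := { decide := true }),
      by simp (config := { decide := true }),
      by simp (config := { decide := true }),
      by simp (config := { decide := true }), ?_⟩
    set ψ0 : HachimojiGroup → ℝ := fun u => if u = ((0,0,0) : HachimojiGroup) then -(4*β+γ+2*δ)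
        else if u = (0,1,1) then γ else if u = (1,0,0) then δ
        else if u = (1,1,1) then δ else β with hψ0def
    obtain ⟨hq0, hqx, hqy1, hqy2, hqz1, hqz2, hqz3, hqz4⟩ :=
      hat_vals ψ0 (-(4*β+γ+2*δ)) β γ δ
        (by rw [hψ0def]; simp (config := { decide := true }))
        (by rw [hψ0def]; simp (config := { decide := true }))
        (by rw [hψ0def]; simp (config := { decide := true }))
        (by rw [hψ0def]; simp (config := { decide := true }))
        (by rw [hψ0def]; simp (config := { decide := true }))
        (by rw [hψ0def]; simp (config := { decide := true }))
        (by rw [hψ0def]; simp (config := { decide := true }))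
        (by rw [hψ0def]; simp (config := { decide := true }))
    rw [conv_eq_Phi, exp_Phi, hMf]
    refine congrArg Phi (funext fun u => ?_)
    obtain ⟨u1, u2, u3⟩ := u
    have key0 : a + 4 * b + c + 2 * d = Real.exp ((-(4*β+γ+2*δ)) + 4*β + γ + 2*δ) := by
      rw [show (-(4*β+γ+2*δ)) + 4*β + γ + 2*δ = 0 from by ring, Real.exp_zero]
      linarith
    have keyx : a - 4 * b + c + 2 * d = Real.exp ((-(4*β+γ+2*δ)) - 4*β + γ + 2*δ) := by
      rw [show (-(4*β+γ+2*δ)) - 4*β + γ + 2*δ = lx from by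
        rw [hβdef]; ring, hlxdef, Real.exp_log hX]
    have keyy : a + c - 2 * d = Real.exp ((-(4*β+γ+2*δ)) + γ - 2*δ) := by
      rw [show (-(4*β+γ+2*δ)) + γ - 2*δ = ly from by
        rw [hβdef, hδdef]; ring, hlydef, Real.exp_log hY]
    have keyz : a - c = Real.exp ((-(4*β+γ+2*δ)) - γ) := by
      rw [show (-(4*β+γ+2*δ)) - γ = lz from by
        rw [hβdef, hγdef, hδdef]; ring, hlzdef, Real.exp_log hZ]
    rcases zmod2_cases u1 with h1 | h1 <;> rcases zmod2_cases u2 with h2 | h2 <;>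
      rcases zmod2_cases u3 with h3 | h3 <;> subst h1 <;> subst h2 <;> subst h3
    · rw [hf0, hq0]; exact key0
    · rw [hfz1, hqz1]; exact keyz
    · rw [hfz2, hqz2]; exact keyz
    · rw [hfx, hqx]; exact keyx
    · rw [hfy1, hqy1]; exact keyy
    · rw [hfz3, hqz3]; exact keyz
    · rw [hfz4, hqz4]; exact keyz
    · rw [hfy2, hqy2]; exact keyy
end

section
/- The Lebesgue volume of the set Δ = { (x, y, z) ∈ ℝ³ : x ≤ 1, 1 + x + 2y + 4z ≥ 0, 1 + x + 2y − 4z ≥ 0, 1 + x − 2y ≥ 0 } equals 4/3. -/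
open MeasureTheory Set

-- inner 1D integral
lemma aux_inner (x : ℝ) (hx : -1 ≤ x) :
    ∫ y in (-(1+x)/2)..((1+x)/2), (1+x+2*y)/2 = (1+x)^2/2 := by
  have h : ∀ y ∈ Set.uIcc (-(1+x)/2) ((1+x)/2),
      HasDerivAt (fun y => ((1+x)*y)/2 + y^2/2) ((1+x+2*y)/2) y := by
    intro y _
    have h1 : HasDerivAt (fun y : ℝ => ((1+x)*y)/2 + y^2/2) ((1+x)/2 + y) y := by
      have := ((hasDerivAt_id y).const_mul (1+x)).div_const 2 |>.add
        (((hasDerivAt_pow 2 y)).div_const 2)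
      simpa [Pi.add_def] using this
    convert h1 using 1; ring
  rw [intervalIntegral.integral_eq_sub_of_hasDerivAt h (by
    apply ContinuousOn.intervalIntegrable; fun_prop)]
  ring

lemma aux_outer : ∫ x in (-1:ℝ)..1, (1+x)^2/2 = 4/3 := by
  have h : ∀ x ∈ Set.uIcc (-1:ℝ) 1,
      HasDerivAt (fun x => (1+x)^3/6) ((1+x)^2/2) x := by
    intro x _
    have h1 : HasDerivAt (fun x : ℝ => (1+x)^3/6) ((3:ℕ) * (1+x)^2 * 1 / 6) x := by
      exact (((hasDerivAt_id x).const_add 1).pow 3).div_const 6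
    convert h1 using 1; push_cast; ring
  rw [intervalIntegral.integral_eq_sub_of_hasDerivAt h (by
    apply ContinuousOn.intervalIntegrable; fun_prop)]
  norm_num

/-- The Lebesgue volume of the eigenvalue parameterization `Δ` of the hachimoji 3-parameter
Markov matrices equals `4/3`. -/
theorem h3p_volume_markov :
    MeasureTheory.volume {p : ℝ × ℝ × ℝ |
      p.1 ≤ 1 ∧ 0 ≤ 1 + p.1 + 2 * p.2.1 + 4 * p.2.2 ∧
      0 ≤ 1 + p.1 + 2 * p.2.1 - 4 * p.2.2 ∧ 0 ≤ 1 + p.1 - 2 * p.2.1} =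
    ENNReal.ofReal (4 / 3) := by
  set S : Set (ℝ × ℝ × ℝ) := {p : ℝ × ℝ × ℝ |
      p.1 ≤ 1 ∧ 0 ≤ 1 + p.1 + 2 * p.2.1 + 4 * p.2.2 ∧
      0 ≤ 1 + p.1 + 2 * p.2.1 - 4 * p.2.2 ∧ 0 ≤ 1 + p.1 - 2 * p.2.1} with hSdef
  have hS : MeasurableSet S := by
    rw [hSdef]
    simp only [Set.setOf_and]
    refine (MeasurableSet.inter ?_ (MeasurableSet.inter ?_ (MeasurableSet.inter ?_ ?_))) <;>
      (apply measurableSet_le <;> fun_prop)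
  rw [Measure.volume_eq_prod, Measure.prod_apply hS]
  -- slice at x
  have hslice : ∀ x : ℝ, (volume : Measure (ℝ × ℝ)) (Prod.mk x ⁻¹' S)
      = (Set.Icc (-1:ℝ) 1).indicator (fun x => ENNReal.ofReal ((1+x)^2/2)) x := by
    intro x
    have hpre : Prod.mk x ⁻¹' S = {q : ℝ × ℝ | x ≤ 1 ∧ 0 ≤ 1 + x + 2*q.1 + 4*q.2 ∧
        0 ≤ 1 + x + 2*q.1 - 4*q.2 ∧ 0 ≤ 1 + x - 2*q.1} := rfl
    rw [hpre]
    by_cases hx1 : x ≤ 1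
    · -- inner slicing in y
      have hT : MeasurableSet {q : ℝ × ℝ | x ≤ 1 ∧ 0 ≤ 1 + x + 2*q.1 + 4*q.2 ∧
          0 ≤ 1 + x + 2*q.1 - 4*q.2 ∧ 0 ≤ 1 + x - 2*q.1} := by
        simp only [Set.setOf_and]
        refine (MeasurableSet.inter ?_ (MeasurableSet.inter ?_ (MeasurableSet.inter ?_ ?_))) <;>
          first
          | exact MeasurableSet.const _
          | (apply measurableSet_le <;> fun_prop)
      rw [Measure.volume_eq_prod, Measure.prod_apply hT]
      have hz : ∀ y : ℝ, (volume : Measure ℝ)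
          (Prod.mk y ⁻¹' {q : ℝ × ℝ | x ≤ 1 ∧ 0 ≤ 1 + x + 2*q.1 + 4*q.2 ∧
            0 ≤ 1 + x + 2*q.1 - 4*q.2 ∧ 0 ≤ 1 + x - 2*q.1})
          = (Set.Icc (-(1+x)/2) ((1+x)/2)).indicator
              (fun y => ENNReal.ofReal ((1+x+2*y)/2)) y := by
        intro y
        by_cases hy : 0 ≤ 1 + x - 2*y
        · have hset : Prod.mk y ⁻¹' {q : ℝ × ℝ | x ≤ 1 ∧ 0 ≤ 1 + x + 2*q.1 + 4*q.2 ∧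
              0 ≤ 1 + x + 2*q.1 - 4*q.2 ∧ 0 ≤ 1 + x - 2*q.1}
              = Set.Icc (-(1+x+2*y)/4) ((1+x+2*y)/4) := by
            ext z
            simp only [Set.mem_preimage, Set.mem_setOf_eq, Set.mem_Icc]
            constructor
            · rintro ⟨_, h2, h3, _⟩; constructor <;> linarith
            · rintro ⟨h2, h3⟩; refine ⟨hx1, by linarith, by linarith, hy⟩
          rw [hset, Real.volume_Icc]
          by_cases hy2 : -(1+x)/2 ≤ y
          · rw [Set.indicator_of_mem (by constructor <;> linarith)]
            congr 1; ring
          · rw [Set.indicator_of_notMem (by simp only [Set.mem_Icc, not_and_or]; left; linarith)]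
            rw [ENNReal.ofReal_eq_zero]
            nlinarith
        · have hset : Prod.mk y ⁻¹' {q : ℝ × ℝ | x ≤ 1 ∧ 0 ≤ 1 + x + 2*q.1 + 4*q.2 ∧
              0 ≤ 1 + x + 2*q.1 - 4*q.2 ∧ 0 ≤ 1 + x - 2*q.1} = ∅ := by
            ext z
            simp only [Set.mem_preimage, Set.mem_setOf_eq, Set.mem_empty_iff_false, iff_false]
            rintro ⟨_, _, _, h4⟩; exact hy h4
          rw [hset, measure_empty]
          rw [Set.indicator_of_notMem (by simp only [Set.mem_Icc, not_and_or]; right; linarith)]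
      rw [lintegral_congr hz]
      rw [lintegral_indicator measurableSet_Icc _]
      rw [← MeasureTheory.ofReal_integral_eq_lintegral_ofReal]
      · -- compute the real integral
        by_cases hx2 : -1 ≤ x
        · rw [Set.indicator_of_mem (by constructor <;> linarith)]
          rw [MeasureTheory.integral_Icc_eq_integral_Ioc,
            ← intervalIntegral.integral_of_le (by linarith)]
          rw [aux_inner x hx2]
        · rw [Set.indicator_of_notMem (by simp only [Set.mem_Icc, not_and_or]; left; linarith)]
          have : Set.Icc (-(1+x)/2) ((1+x)/2) = ∅ := Set.Icc_eq_empty (by intro h; linarith)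
          rw [this]
          simp
      · apply ContinuousOn.integrableOn_Icc; fun_prop
      · filter_upwards [ae_restrict_mem measurableSet_Icc] with y hy
        have := hy.1
        simp only [Pi.zero_apply]
        linarith
    · -- x > 1 : empty
      have hset : {q : ℝ × ℝ | x ≤ 1 ∧ 0 ≤ 1 + x + 2*q.1 + 4*q.2 ∧
          0 ≤ 1 + x + 2*q.1 - 4*q.2 ∧ 0 ≤ 1 + x - 2*q.1} = ∅ := by
        ext q
        simp only [Set.mem_setOf_eq, Set.mem_empty_iff_false, iff_false]
        rintro ⟨h1, _⟩; exact hx1 h1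
      rw [hset, measure_empty]
      rw [Set.indicator_of_notMem (by simp only [Set.mem_Icc, not_and_or]; right; linarith)]
  rw [lintegral_congr hslice]
  rw [lintegral_indicator measurableSet_Icc _]
  rw [← MeasureTheory.ofReal_integral_eq_lintegral_ofReal]
  · congr 1
    rw [MeasureTheory.integral_Icc_eq_integral_Ioc,
      ← intervalIntegral.integral_of_le (by norm_num)]
    exact aux_outer
  · apply ContinuousOn.integrableOn_Icc; fun_prop
  · filter_upwards with x
    positivity
end

section
/- The Lebesgue volume of the set Δ_me = { (x, y, z) ∈ ℝ³ : 0 < x ≤ 1, 0 < y, 0 < z, y² ≤ x, z⁴ ≤ x·y² } equals 1/3. -/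
open Real MeasureTheory Set

/-- The Lebesgue volume of the eigenvalue parameterization `Δ_me` of the model embeddable
hachimoji 3-parameter Markov matrices equals `1/3`. -/
theorem h3p_volume_embeddable :
    MeasureTheory.volume {p : ℝ × ℝ × ℝ |
      0 < p.1 ∧ p.1 ≤ 1 ∧ 0 < p.2.1 ∧ 0 < p.2.2 ∧
      p.2.1 ^ 2 ≤ p.1 ∧ p.2.2 ^ 4 ≤ p.1 * p.2.1 ^ 2} =
    ENNReal.ofReal (1 / 3) := by
  set A : Set (ℝ × ℝ × ℝ) := {p : ℝ × ℝ × ℝ |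
      0 < p.1 ∧ p.1 ≤ 1 ∧ 0 < p.2.1 ∧ 0 < p.2.2 ∧
      p.2.1 ^ 2 ≤ p.1 ∧ p.2.2 ^ 4 ≤ p.1 * p.2.1 ^ 2} with hAdef
  have hA : MeasurableSet A := by
    apply MeasurableSet.inter
    · exact measurableSet_lt measurable_const measurable_fst
    apply MeasurableSet.inter
    · exact measurableSet_le measurable_fst measurable_const
    apply MeasurableSet.inter
    · exact measurableSet_lt measurable_const (measurable_fst.comp measurable_snd)
    apply MeasurableSet.inter
    · exact measurableSet_lt measurable_const (measurable_snd.comp measurable_snd)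
    apply MeasurableSet.inter
    · exact measurableSet_le ((measurable_fst.comp measurable_snd).pow_const 2) measurable_fst
    · exact measurableSet_le ((measurable_snd.comp measurable_snd).pow_const 4)
        (measurable_fst.mul ((measurable_fst.comp measurable_snd).pow_const 2))
  -- slice volumes
  have slice : ∀ x : ℝ, volume (Prod.mk x ⁻¹' A) =
      (Ioc (0:ℝ) 1).indicator (fun x => ENNReal.ofReal (2/3 * x)) x := by
    intro x
    by_cases hx : x ∈ Ioc (0:ℝ) 1
    · obtain ⟨hx0, hx1⟩ := hx
      have hpre : Prod.mk x ⁻¹' A = {q : ℝ × ℝ |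
          0 < q.1 ∧ 0 < q.2 ∧ q.1 ^ 2 ≤ x ∧ q.2 ^ 4 ≤ x * q.1 ^ 2} := by
        ext q; simp [hAdef, hx0, hx1, and_assoc]
      rw [hpre]
      set B : Set (ℝ × ℝ) := {q : ℝ × ℝ |
          0 < q.1 ∧ 0 < q.2 ∧ q.1 ^ 2 ≤ x ∧ q.2 ^ 4 ≤ x * q.1 ^ 2} with hBdef
      have hB : MeasurableSet B := by
        apply MeasurableSet.inter
        · exact measurableSet_lt measurable_const measurable_fst
        apply MeasurableSet.inter
        · exact measurableSet_lt measurable_const measurable_snd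
        apply MeasurableSet.inter
        · exact measurableSet_le (measurable_fst.pow_const 2) measurable_const
        · exact measurableSet_le (measurable_snd.pow_const 4)
            ((measurable_const.mul (measurable_fst.pow_const 2)))
      rw [Measure.volume_eq_prod, Measure.prod_apply hB]
      have slice2 : ∀ y : ℝ, volume (Prod.mk y ⁻¹' B) =
          (Ioc (0:ℝ) (Real.sqrt x)).indicator
            (fun y => ENNReal.ofReal ((x * y ^ 2) ^ (4⁻¹:ℝ))) y := by
        intro y
        by_cases hy : y ∈ Ioc (0:ℝ) (Real.sqrt x)
        · have hy0 := hy.1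
          have hy2 : y ^ 2 ≤ x := (Real.le_sqrt' hy0).mp hy.2
          have hc : 0 < x * y ^ 2 := by positivity
          have hpre2 : Prod.mk y ⁻¹' B = Ioc 0 ((x * y ^ 2) ^ (4⁻¹:ℝ)) := by
            have hc4 : ((x * y ^ 2) ^ (4⁻¹:ℝ)) ^ (4:ℕ) = x * y ^ 2 := by
              rw [← Real.rpow_natCast ((x * y ^ 2) ^ (4⁻¹:ℝ)), ← Real.rpow_mul hc.le]
              norm_num
            ext z
            simp only [hBdef, mem_preimage, mem_setOf_eq, hy0, hy2, true_and, mem_Ioc]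
            constructor
            · rintro ⟨hz, hz4⟩
              refine ⟨hz, ?_⟩
              nth_rewrite 1 [← hc4] at hz4
              exact (pow_le_pow_iff_left₀ hz.le (Real.rpow_nonneg hc.le _) (by norm_num)).mp hz4
            · rintro ⟨hz, hz4⟩
              refine ⟨hz, ?_⟩
              rw [← hc4]
              exact pow_le_pow_left₀ hz.le hz4 4
          rw [hpre2, Real.volume_Ioc, indicator_of_mem hy]
          norm_num
        · have : Prod.mk y ⁻¹' B = ∅ := by
            ext z
            simp only [hBdef, mem_preimage, mem_setOf_eq, mem_empty_iff_false, iff_false]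
            rintro ⟨hy0, -, hy2, -⟩
            exact hy ⟨hy0, (Real.le_sqrt' hy0).mpr hy2⟩
          rw [this, measure_empty, indicator_of_notMem hy]
      rw [lintegral_congr slice2, lintegral_indicator measurableSet_Ioc]
      have hcont : Continuous (fun y : ℝ => (x * y ^ 2) ^ (4⁻¹:ℝ)) := by
        apply Continuous.rpow_const
        · continuity
        · intro y; right; norm_num
      have hint : IntegrableOn (fun y : ℝ => (x * y ^ 2) ^ (4⁻¹:ℝ)) (Ioc 0 (Real.sqrt x)) :=
        (hcont.integrableOn_Icc).mono_set Ioc_subset_Icc_self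
      rw [← MeasureTheory.ofReal_integral_eq_lintegral_ofReal hint
        (Filter.Eventually.of_forall fun y => Real.rpow_nonneg (by positivity) _)]
      have hsq : 0 ≤ Real.sqrt x := Real.sqrt_nonneg x
      have heq : ∀ y ∈ Ioc (0:ℝ) (Real.sqrt x),
          (x * y ^ 2) ^ (4⁻¹:ℝ) = x ^ (4⁻¹:ℝ) * y ^ (2⁻¹:ℝ) := by
        intro y hy
        rw [Real.mul_rpow hx0.le (by positivity), ← Real.rpow_natCast y 2,
          ← Real.rpow_mul hy.1.le]
        norm_num
      rw [setIntegral_congr_fun measurableSet_Ioc heq,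
        ← intervalIntegral.integral_of_le hsq, intervalIntegral.integral_const_mul,
        integral_rpow (Or.inl (by norm_num))]
      rw [indicator_of_mem (mem_Ioc.mpr ⟨hx0, hx1⟩)]
      congr 1
      rw [Real.zero_rpow (by norm_num), Real.sqrt_eq_rpow, ← Real.rpow_mul hx0.le]
      have h1 : x ^ (4⁻¹:ℝ) * x ^ ((1:ℝ)/2 * (2⁻¹+1)) = x := by
        rw [← Real.rpow_add hx0]; norm_num [Real.rpow_one]
      rw [sub_zero, ← mul_div_assoc, h1]
      ring
    · have : Prod.mk x ⁻¹' A = ∅ := by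
        ext q
        simp only [hAdef, mem_preimage, mem_setOf_eq, mem_empty_iff_false, iff_false]
        rintro ⟨hx0, hx1, -⟩
        exact hx ⟨hx0, hx1⟩
      rw [this, measure_empty, indicator_of_notMem hx]
  rw [Measure.volume_eq_prod, Measure.prod_apply hA, lintegral_congr slice,
    lintegral_indicator measurableSet_Ioc]
  have hint : IntegrableOn (fun x : ℝ => 2/3 * x) (Ioc (0:ℝ) 1) :=
    ((continuous_const.mul continuous_id).integrableOn_Icc).mono_set Ioc_subset_Icc_self
  rw [← MeasureTheory.ofReal_integral_eq_lintegral_ofReal hint ?_]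
  · congr 1
    rw [← intervalIntegral.integral_of_le zero_le_one, intervalIntegral.integral_const_mul,
      integral_id]
    norm_num
  · filter_upwards [ae_restrict_mem measurableSet_Ioc] with x hx
    have := hx.1
    positivity
end

section
/- Let G = ℤ/2 × ℤ/2 × ℤ/2, and for g, h ∈ G write ⟨g,h⟩ ∈ ℤ/2 for the sum of the coordinatewise products of g and h, and set ε(g,h) = 1 if ⟨g,h⟩ = 0 and ε(g,h) = −1 otherwise. The Lebesgue volume of the set Δ_dd = { λ : {g ∈ G : g ≠ 0} → ℝ | for every g ∈ G, 1 + ∑_{h≠0} ε(g,h)·λ_h ≥ 0, and ∑_{h≠0} λ_h ≥ 3 } (a subset of ℝ⁷) equals 2/315. -/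
open MeasureTheory Set
open scoped ENNReal

def simSet (n : ℕ) (r : ℝ) : Set (Fin n → ℝ) :=
  {x | (∀ i, 0 ≤ x i) ∧ ∑ i, x i ≤ r}

lemma simSet_empty {n : ℕ} {r : ℝ} (hr : r < 0) : simSet n r = ∅ := by
  ext x
  simp only [simSet, Set.mem_setOf_eq, Set.mem_empty_iff_false, iff_false, not_and]
  intro hx h
  exact absurd (le_trans (Finset.sum_nonneg fun i _ => hx i) h) (not_le.2 hr)

lemma measurableSet_simSet (n : ℕ) (r : ℝ) : MeasurableSet (simSet n r) := by
  have : simSet n r = (⋂ i, {x : Fin n → ℝ | 0 ≤ x i}) ∩ {x | ∑ i, x i ≤ r} := by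
    ext x; simp [simSet, forall_and]
  rw [this]
  exact (MeasurableSet.iInter fun i =>
      measurableSet_le measurable_const (measurable_pi_apply i)).inter
    (measurableSet_le (Finset.measurable_sum _ fun i _ => measurable_pi_apply i) measurable_const)

lemma simSet_volume (n : ℕ) : ∀ r : ℝ, 0 ≤ r →
    volume (simSet n r) = ENNReal.ofReal r ^ n / (n.factorial : ℝ≥0∞) := by
  induction n with
  | zero =>
    intro r hr
    have : simSet 0 r = Set.univ := by
      ext x; simp [simSet, hr]
    rw [this, MeasureTheory.volume_pi, MeasureTheory.Measure.pi_univ]; simp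
  | succ n ih =>
    intro r hr
    set e := MeasurableEquiv.piFinSuccAbove (fun _ : Fin (n+1) => ℝ) 0 with he
    have MP : MeasurePreserving e volume (volume.prod volume) :=
      volume_preserving_piFinSuccAbove (fun _ : Fin (n+1) => ℝ) 0
    set S' : Set (ℝ × (Fin n → ℝ)) :=
      {p | 0 ≤ p.1 ∧ (∀ i, 0 ≤ p.2 i) ∧ p.1 + ∑ i, p.2 i ≤ r} with hS'
    have hS'meas : MeasurableSet S' := by
      have : S' = {p : ℝ × (Fin n → ℝ) | 0 ≤ p.1} ∩
          ((⋂ i, {p : ℝ × (Fin n → ℝ) | 0 ≤ p.2 i}) ∩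
            {p : ℝ × (Fin n → ℝ) | p.1 + ∑ i, p.2 i ≤ r}) := by
        ext p; simp [hS', forall_and, and_assoc]
      rw [this]
      refine (measurableSet_le measurable_const measurable_fst).inter
        ((MeasurableSet.iInter fun i =>
          measurableSet_le measurable_const ((measurable_pi_apply i).comp measurable_snd)).inter
        (measurableSet_le (measurable_fst.add
          (Finset.measurable_sum _ fun i _ => (measurable_pi_apply i).comp measurable_snd))
          measurable_const))
    have hpre : simSet (n+1) r = e ⁻¹' S' := by
      ext x
      simp only [simSet, Set.mem_setOf_eq, Set.mem_preimage, hS', he,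
        MeasurableEquiv.piFinSuccAbove_apply, Fin.forall_fin_succ, Fin.sum_univ_succ]
      tauto
    rw [hpre, MP.measure_preimage hS'meas.nullMeasurableSet,
      Measure.prod_apply hS'meas]
    have hsec : ∀ t : ℝ, (Prod.mk t ⁻¹' S') =
        if 0 ≤ t then simSet n (r - t) else ∅ := by
      intro t
      ext y
      by_cases ht : 0 ≤ t <;> simp [hS', simSet, ht, le_sub_iff_add_le, add_comm]
    have hint : ∀ t : ℝ, volume (Prod.mk t ⁻¹' S') =
        Set.indicator (Icc 0 r) (fun t => ENNReal.ofReal ((r - t)^n) / (n.factorial : ℝ≥0∞)) t := by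
      intro t
      rw [hsec]
      by_cases ht : 0 ≤ t
      · by_cases htr : t ≤ r
        · rw [if_pos ht, Set.indicator_of_mem (Set.mem_Icc.2 ⟨ht, htr⟩), ih (r - t) (sub_nonneg.2 htr),
            ENNReal.ofReal_pow (sub_nonneg.2 htr)]
        · rw [if_pos ht, Set.indicator_of_notMem (fun h => htr h.2),
            simSet_empty (by linarith), measure_empty]
      · rw [if_neg ht, Set.indicator_of_notMem (fun h => ht h.1), measure_empty]
    simp_rw [hint]
    rw [lintegral_indicator measurableSet_Icc]
    simp_rw [div_eq_mul_inv]
    rw [lintegral_mul_const' _ _ (by simp [Nat.factorial_ne_zero])]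
    have key : ∫⁻ t in Icc 0 r, ENNReal.ofReal ((r - t)^n) =
        ENNReal.ofReal (r ^ (n+1) / (n+1)) := by
      rw [← ofReal_integral_eq_lintegral_ofReal]
      · congr 1
        rw [integral_Icc_eq_integral_Ioc, ← intervalIntegral.integral_of_le hr,
          intervalIntegral.integral_comp_sub_left (fun s => s ^ n) r]
        simp [integral_pow]
      · exact (Continuous.integrableOn_Icc (by continuity))
      · filter_upwards [self_mem_ae_restrict measurableSet_Icc] with t ht
        exact pow_nonneg (sub_nonneg.2 ht.2) n
    rw [key, ENNReal.ofReal_div_of_pos (by positivity), ENNReal.ofReal_pow hr,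
      show ENNReal.ofReal ((n:ℝ)+1) = ((n+1:ℕ) : ℝ≥0∞) from by
        rw [← Nat.cast_add_one, ENNReal.ofReal_natCast],
      div_eq_mul_inv, mul_assoc, ← ENNReal.mul_inv (by simp) (by simp),
      ← Nat.cast_mul, ← Nat.factorial_succ, ← div_eq_mul_inv]


abbrev HIdx := {g : HachimojiGroup // g ≠ 0}

def epsZ (g h : HachimojiGroup) : ℤ := if hachimojiPairing g h = 0 then 1 else -1

lemma eps_eq_cast (g h : HachimojiGroup) : hachimojiEps g h = (epsZ g h : ℝ) := by
  unfold hachimojiEps epsZ; split_ifs <;> simp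

lemma eps_zero_right (g : HachimojiGroup) : hachimojiEps g 0 = 1 := by
  unfold hachimojiEps hachimojiPairing; norm_num

lemma eps_zero_left (g : HachimojiGroup) : hachimojiEps 0 g = 1 := by
  unfold hachimojiEps hachimojiPairing; norm_num

lemma factZ1 : ∀ i j : HachimojiGroup,
    (∑ k : HachimojiGroup, epsZ i k * epsZ k j) = if i = j then 8 else 0 := by decide

lemma factZ2 : ∀ g : HachimojiGroup,
    (∑ h : HachimojiGroup, epsZ h g) = if g = 0 then 8 else 0 := by decide

lemma sum_split (f : HachimojiGroup → ℝ) :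
    ∑ k : HachimojiGroup, f k = f 0 + ∑ k : HIdx, f k.1 := by
  have h : ∑ k : HIdx, f k.1 = ∑ k ∈ Finset.univ.erase 0, f k :=
    (Finset.sum_subtype (Finset.univ.erase 0) (by simp) f).symm
  rw [h, Finset.add_sum_erase _ f (Finset.mem_univ 0)]

lemma fact1 (i j : HachimojiGroup) :
    ∑ k : HIdx, hachimojiEps i k.1 * hachimojiEps k.1 j =
      (if i = j then (8:ℝ) else 0) - 1 := by
  have h := sum_split (fun k => hachimojiEps i k * hachimojiEps k j)
  simp only [eps_zero_right i, eps_zero_left j, one_mul] at h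
  have h2 : ∑ k : HachimojiGroup, hachimojiEps i k * hachimojiEps k j =
      if i = j then (8:ℝ) else 0 := by
    simp_rw [eps_eq_cast, ← Int.cast_mul, ← Int.cast_sum, factZ1 i j]
    split_ifs <;> norm_num
  rw [h2] at h
  linarith

lemma fact2 (g : HIdx) : ∑ h : HIdx, hachimojiEps h.1 g.1 = -1 := by
  have h := sum_split (fun h => hachimojiEps h g.1)
  have h2 : ∑ h : HachimojiGroup, hachimojiEps h g.1 = 0 := by
    simp_rw [eps_eq_cast, ← Int.cast_sum, factZ2 g.1, if_neg g.2]
    norm_num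
  rw [h2, eps_zero_left] at h
  linarith

noncomputable def Mε : Matrix HIdx HIdx ℝ := Matrix.of fun i j => hachimojiEps i.1 j.1

lemma card_HIdx : Fintype.card HIdx = 7 := by decide

lemma Mε_sq : Mε * Mε = (8:ℝ) • 1 - Matrix.of (fun _ _ => (1:ℝ)) := by
  ext i j
  simp only [Matrix.mul_apply, Mε, Matrix.of_apply, Matrix.sub_apply, Matrix.smul_apply,
    Matrix.one_apply, smul_eq_mul]
  rw [fact1 i.1 j.1]
  by_cases hij : i = j
  · subst hij; simp
  · have h' : i.1 ≠ j.1 := fun h => hij (Subtype.ext h)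
    simp [hij, h']

lemma det_J : ((8:ℝ) • 1 - Matrix.of (fun _ _ => (1:ℝ)) : Matrix HIdx HIdx ℝ).det = 8^6 := by
  have h1 : ((8:ℝ) • 1 - Matrix.of (fun _ _ => (1:ℝ)) : Matrix HIdx HIdx ℝ) =
      (8:ℝ) • (1 + Matrix.replicateCol Unit (fun _ => (1:ℝ)) * Matrix.replicateRow Unit (fun _ => -(8:ℝ)⁻¹)) := by
    ext i j
    simp [Matrix.mul_apply, Matrix.one_apply, Matrix.replicateCol, Matrix.replicateRow]
    split_ifs <;> ring
  rw [h1, Matrix.det_smul, Matrix.det_one_add_replicateCol_mul_replicateRow, card_HIdx]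
  simp [dotProduct, card_HIdx]
  norm_num

lemma abs_det_Mε : |Mε.det| = 512 := by
  have h : Mε.det * Mε.det = 8^6 := by
    rw [← Matrix.det_mul, Mε_sq, det_J]
  have h2 : |Mε.det| ^ 2 = 512 ^ 2 := by
    rw [sq_abs, sq]; rw [h]; norm_num
  have := abs_nonneg Mε.det
  nlinarith [abs_nonneg Mε.det]

open MeasureTheory Set
open scoped ENNReal

noncomputable def Lmap : (HIdx → ℝ) →ₗ[ℝ] (HIdx → ℝ) := Matrix.toLin' Mε

lemma Lmap_apply (lam : HIdx → ℝ) (i : HIdx) :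
    Lmap lam i = ∑ j : HIdx, hachimojiEps i.1 j.1 * lam j := by
  simp [Lmap, Matrix.toLin'_apply, Matrix.mulVec, dotProduct, Mε]

lemma Lmap_sum (lam : HIdx → ℝ) :
    ∑ i : HIdx, Lmap lam i = - ∑ j : HIdx, lam j := by
  simp_rw [Lmap_apply]
  rw [Finset.sum_comm]
  simp_rw [← Finset.sum_mul]
  have : ∀ j : HIdx, (∑ i : HIdx, hachimojiEps i.1 j.1) * lam j = - lam j := by
    intro j; rw [fact2 j]; ring
  rw [Finset.sum_congr rfl fun j _ => this j, ← Finset.sum_neg_distrib]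

lemma det_Lmap : LinearMap.det Lmap = Mε.det := LinearMap.det_toLin' Mε

lemma det_Lmap_ne : LinearMap.det Lmap ≠ 0 := by
  rw [det_Lmap]
  intro h
  have := abs_det_Mε
  rw [h] at this
  norm_num at this

def Tset : Set (HIdx → ℝ) := {μ | (∀ h : HIdx, 0 ≤ 1 + μ h) ∧ ∑ h : HIdx, μ h ≤ -3}
def T0set : Set (HIdx → ℝ) := {ν | (∀ h : HIdx, 0 ≤ ν h) ∧ ∑ h : HIdx, ν h ≤ 4}

lemma set_eq :
    {lam : HIdx → ℝ |
      (∀ g : HachimojiGroup,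
        0 ≤ 1 + ∑ h : HIdx, hachimojiEps g h.1 * lam h) ∧
      3 ≤ ∑ h : HIdx, lam h} = ⇑Lmap ⁻¹' Tset := by
  ext lam
  simp only [Set.mem_setOf_eq, Set.mem_preimage, Tset]
  constructor
  · rintro ⟨h1, h2⟩
    refine ⟨fun h => ?_, ?_⟩
    · rw [Lmap_apply]; exact h1 h.1
    · rw [Lmap_sum]; linarith
  · rintro ⟨h1, h2⟩
    have hsum : 3 ≤ ∑ h : HIdx, lam h := by
      have h3 := h2
      rw [Lmap_sum] at h3
      linarith
    refine ⟨fun g => ?_, hsum⟩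
    by_cases hg : g = 0
    · subst hg
      simp only [eps_zero_left, one_mul]
      linarith
    · have := h1 ⟨g, hg⟩
      rw [Lmap_apply] at this
      exact this

lemma T_translate : Tset = (· + (fun _ => (1:ℝ))) ⁻¹' T0set := by
  ext μ
  simp only [Tset, T0set, Set.mem_setOf_eq, Set.mem_preimage, Pi.add_apply]
  have hsum : ∑ h : HIdx, (μ h + 1) = (∑ h : HIdx, μ h) + 7 := by
    rw [Finset.sum_add_distrib, Finset.sum_const, Finset.card_univ, card_HIdx]
    norm_num
  rw [hsum]
  constructor
  · rintro ⟨h1, h2⟩; exact ⟨fun h => by linarith [h1 h], by linarith⟩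
  · rintro ⟨h1, h2⟩; exact ⟨fun h => by linarith [h1 h], by linarith⟩

lemma measurableSet_T0 : MeasurableSet T0set := by
  have : T0set = (⋂ i : HIdx, {x : HIdx → ℝ | 0 ≤ x i}) ∩ {x | ∑ i : HIdx, x i ≤ 4} := by
    ext x; simp [T0set, forall_and]
  rw [this]
  exact (MeasurableSet.iInter fun i =>
      measurableSet_le measurable_const (measurable_pi_apply i)).inter
    (measurableSet_le (Finset.measurable_sum _ fun i _ => measurable_pi_apply i) measurable_const)

lemma T0_volume : volume T0set = ENNReal.ofReal 4 ^ 7 / (5040 : ℝ≥0∞) := by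
  have e7 : Fin 7 ≃ HIdx := (Fintype.equivFinOfCardEq card_HIdx).symm
  have MP := volume_measurePreserving_piCongrLeft (fun _ : HIdx => ℝ) e7
  have hpre : (MeasurableEquiv.piCongrLeft (fun _ : HIdx => ℝ) e7) ⁻¹' T0set = simSet 7 4 := by
    ext x
    simp only [Set.mem_preimage, T0set, Set.mem_setOf_eq, simSet,
      MeasurableEquiv.coe_piCongrLeft]
    have hall : (∀ h : HIdx, 0 ≤ (Equiv.piCongrLeft (fun _ => ℝ) e7) x h) ↔
        ∀ i : Fin 7, 0 ≤ x i := by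
      constructor
      · intro H i
        have := H (e7 i)
        rwa [Equiv.piCongrLeft_apply_apply] at this
      · intro H h
        rw [← e7.apply_symm_apply h, Equiv.piCongrLeft_apply_apply]
        exact H _
    have hsum : ∑ h : HIdx, (Equiv.piCongrLeft (fun _ => ℝ) e7) x h = ∑ i : Fin 7, x i :=
      (Fintype.sum_equiv e7 x (fun h => (Equiv.piCongrLeft (fun _ => ℝ) e7) x h)
        (fun i => (Equiv.piCongrLeft_apply_apply (fun _ => ℝ) e7 x i).symm)).symm
    rw [hall, hsum]
  rw [← MP.measure_preimage measurableSet_T0.nullMeasurableSet, hpre,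
    simSet_volume 7 4 (by norm_num)]
  norm_num [Nat.factorial]

/-- The Lebesgue volume of the eigenvalue parameterization `Δ_dd` (a subset of ℝ⁷) of the
diagonally dominant hachimoji 7-parameter Markov matrices equals `2/315`. -/
theorem h7p_volume_diagonally_dominant :
    MeasureTheory.volume {lam : {g : HachimojiGroup // g ≠ 0} → ℝ |
      (∀ g : HachimojiGroup,
        0 ≤ 1 + ∑ h : {g : HachimojiGroup // g ≠ 0}, hachimojiEps g h.1 * lam h) ∧
      3 ≤ ∑ h : {g : HachimojiGroup // g ≠ 0}, lam h} =
    ENNReal.ofReal (2 / 315) := by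
  rw [set_eq, MeasureTheory.Measure.addHaar_preimage_linearMap volume det_Lmap_ne Tset,
    T_translate, measure_preimage_add_right volume _ T0set, T0_volume, det_Lmap]
  have h : |(Mε.det)⁻¹| = (512:ℝ)⁻¹ := by rw [abs_inv, abs_det_Mε]
  rw [h, ← ENNReal.ofReal_pow (by norm_num : (0:ℝ) ≤ 4), ← mul_div_assoc,
    ← ENNReal.ofReal_mul (by norm_num),
    show (5040:ℝ≥0∞) = ENNReal.ofReal 5040 by norm_num,
    ← ENNReal.ofReal_div_of_pos (by norm_num)]
  norm_num
end
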